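/- arXiv:math/0509374 — 7 statements merged into one kernel-verified Lean document; each statement's English description precedes it below -/
import Mathlib

section
/- Let X be a nonzero lush Banach space over 𝕂 = ℝ or ℂ. Then the numerical index of X equals 1, i.e., n(X) = 1. -/
open Filter Topology Metric

/-- The numerical radius of a bounded linear operator `T` on `X`:
`v(T) = sup { |x*(Tx)| : x ∈ S_X, x* ∈ S_{X*}, x*(x) = 1 }`. -/
noncomputable def numRadius (𝕜 : Type*) {X : Type*} [RCLike 𝕜] [NormedAddCommGroup X]
    [NormedSpace 𝕜 X] (T : X →L[𝕜] X) : ℝ :=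
  sSup {r : ℝ | ∃ (x : X) (f : X →L[𝕜] 𝕜), ‖x‖ = 1 ∧ ‖f‖ = 1 ∧ f x = 1 ∧ r = ‖f (T x)‖}

/-- The numerical index of `X`: `n(X) = inf { v(T) : T ∈ L(X), ‖T‖ = 1 }`. -/
noncomputable def numIndex (𝕜 X : Type*) [RCLike 𝕜] [NormedAddCommGroup X]
    [NormedSpace 𝕜 X] : ℝ :=
  sInf {r : ℝ | ∃ T : X →L[𝕜] X, ‖T‖ = 1 ∧ r = numRadius 𝕜 T}

/-- The slice `S(B_X, f, ε) = {x ∈ B_X : Re f(x) > 1 - ε}`. -/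
def lushSlice {𝕜 X : Type*} [RCLike 𝕜] [NormedAddCommGroup X] [NormedSpace 𝕜 X]
    (f : X →L[𝕜] 𝕜) (ε : ℝ) : Set X :=
  {x | ‖x‖ ≤ 1 ∧ 1 - ε < RCLike.re (f x)}

/-- A Banach space is *lush* if for every `x, y` in the unit sphere and every `ε > 0` there is
a norm-one functional `f` such that `y` belongs to the slice `S(B_X, f, ε)` and the distance
from `x` to the convex hull of `𝕋 · S(B_X, f, ε)` is less than `ε`. -/
def IsLush (𝕜 X : Type*) [RCLike 𝕜] [NormedAddCommGroup X] [NormedSpace 𝕜 X]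
    [NormedSpace ℝ X] [IsScalarTower ℝ 𝕜 X] : Prop :=
  ∀ x y : X, ‖x‖ = 1 → ‖y‖ = 1 → ∀ ε : ℝ, 0 < ε →
    ∃ f : X →L[𝕜] 𝕜, ‖f‖ = 1 ∧ y ∈ lushSlice f ε ∧
      Metric.infDist x
        (convexHull ℝ {z | ∃ (θ : 𝕜) (w : X), ‖θ‖ = 1 ∧ w ∈ lushSlice f ε ∧ z = θ • w}) < ε

section Aux

/-- Purely numerical fact used at the end of `exists_good_pair`. -/
private lemma good_pair_arith {δ s M : ℝ} (hδ : 0 < δ) (hs : 0 < s) (hs1 : s ≤ 1/10)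
    (hδs : 6*s < δ) (hM1 : 1 - s^2 + s*(1-3*s^2) < M) :
    1 - δ < M⁻¹ * ((M-1)/s - s) := by
  have hsq : s^2 ≤ 1/100 := by
    have h := mul_le_mul hs1 hs1 hs.le (by norm_num : (0:ℝ) ≤ 1/10)
    have h2 : s^2 = s*s := by ring
    linarith only [h, h2]
  have hs3 : s^3 ≤ (1/100)*s := by
    have h := mul_le_mul_of_nonneg_right hsq hs.le
    have h2 : s^3 = s^2*s := by ring
    linarith only [h, h2]
  have hMpos : (0:ℝ) < M := by
    have h2 : 0 ≤ 3*s^3 + s^2 := by positivity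
    linarith only [hM1, hs, h2, hsq, hs3]
  rw [show M⁻¹ * ((M-1)/s - s) = (M - 1 - s^2)/(s*M) by field_simp,
    lt_div_iff₀ (by positivity)]
  have hcoef : (0:ℝ) < 1 - s + δ*s := by
    have := mul_pos hδ hs
    linarith only [this, hs1]
  have hstep : (1 - s^2 + s*(1-3*s^2)) * (1 - s + δ*s) < M * (1 - s + δ*s) :=
    mul_lt_mul_of_pos_right hM1 hcoef
  have hfacpos : (0:ℝ) ≤ 1 - s^2 + s*(1-3*s^2) := by
    have hexp : 1 - s^2 + s*(1-3*s^2) = 1 + s - s^2 - 3*s^3 := by ring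
    have h3 : 3*s^3 ≤ (3/100)*s := by linarith only [hs3]
    linarith only [hexp, h3, hsq, hs]
  have h63 : 6*(s*s) ≤ δ*s := by
    have h := mul_le_mul_of_nonneg_right hδs.le hs.le
    linarith only [h]
  have hst1 : (1 - s^2 + s*(1-3*s^2)) * (1 - s + 6*(s*s)) ≤
      (1 - s^2 + s*(1-3*s^2)) * (1 - s + δ*s) :=
    mul_le_mul_of_nonneg_left (by linarith only [h63]) hfacpos
  have hexp2 : (1 - s^2 + s*(1-3*s^2)) * (1 - s + 6*(s*s)) =
      1 + 4*s^2 + 4*s^3 - 3*s^4 - 18*s^5 := by ring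
  have e1 : 3*s^4 ≤ (3/100)*s^2 := by
    have h := mul_le_mul_of_nonneg_right hsq (sq_nonneg s)
    have h2 : s^4 = s^2*s^2 := by ring
    linarith only [h, h2]
  have e2 : 18*s^5 ≤ (18/100)*s^3 := by
    have h3nn : (0:ℝ) ≤ s^3 := by positivity
    have h := mul_le_mul_of_nonneg_right hsq h3nn
    have h2 : s^5 = s^2*s^3 := by ring
    linarith only [h, h2]
  have hpoly : 1 + s^2 ≤ (1 - s^2 + s*(1-3*s^2)) * (1 - s + δ*s) := by
    have h2nn : (0:ℝ) ≤ s^2 := sq_nonneg s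
    have h3nn : (0:ℝ) ≤ s^3 := by positivity
    linarith only [hst1, hexp2, e1, e2, h2nn, h3nn]
  have hfact : 1 + s^2 < M * (1 - s + δ*s) := lt_of_le_of_lt hpoly hstep
  have hexp3 : M * (1 - s + δ*s) = M - s*M + δ*(s*M) := by ring
  have hgoal : s*M - δ*(s*M) < M - 1 - s^2 := by linarith only [hfact, hexp3]
  calc (1-δ)*(s*M) = s*M - δ*(s*M) := by ring
    _ < M - 1 - s^2 := hgoal

variable {𝕜 X : Type*} [RCLike 𝕜] [NormedAddCommGroup X] [NormedSpace 𝕜 X]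
  [NormedSpace ℝ X] [IsScalarTower ℝ 𝕜 X]

set_option maxHeartbeats 1000000 in
/-- Key step: for lush `X` and a norm-one operator `T`, there are exact pairs `(x, g)` with
`‖g (T x)‖` arbitrarily close to `1`. -/
lemma exists_good_pair (h : IsLush 𝕜 X) (T : X →L[𝕜] X) (hT : ‖T‖ = 1)
    {δ : ℝ} (hδ : 0 < δ) :
    ∃ (x : X) (g : X →L[𝕜] 𝕜), ‖x‖ = 1 ∧ ‖g‖ = 1 ∧ g x = 1 ∧ 1 - δ < ‖g (T x)‖ := by
  classical
  set ε : ℝ := min (1/100) (δ^2/72) with hεdef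
  have hε : 0 < ε := lt_min (by norm_num) (by positivity)
  have hε1 : ε ≤ 1/100 := min_le_left _ _
  have hε2 : ε ≤ δ^2/72 := min_le_right _ _
  set s : ℝ := Real.sqrt ε with hsdef
  have hs : 0 < s := Real.sqrt_pos.mpr hε
  have hs2 : s^2 = ε := Real.sq_sqrt hε.le
  have hs1 : s ≤ 1/10 := by
    have h1 : s ≤ Real.sqrt (1/100) := Real.sqrt_le_sqrt hε1
    rwa [show (1:ℝ)/100 = (1/10)^2 by norm_num, Real.sqrt_sq (by norm_num)] at h1
  have hδs : 6*s < δ := by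
    by_contra hcon
    push_neg at hcon
    have h36 : δ^2 ≤ (6*s)^2 := pow_le_pow_left₀ hδ.le hcon 2
    have h72 : 72*s^2 ≤ δ^2 := by
      have h' := hs2 ▸ hε2
      linarith only [h']
    have hssq : 0 < s^2 := pow_pos hs 2
    have hexp : (6*s)^2 = 36*s^2 := by ring
    linarith only [h36, h72, hssq, hexp]
  -- pick a near-norming point
  have hT1 : (1:ℝ) - ε < ‖T‖ := by rw [hT]; linarith only [hε]
  obtain ⟨x, hxlt, hTx⟩ := T.exists_lt_apply_of_lt_opNorm hT1
  have hx0 : x ≠ 0 := by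
    rintro rfl
    rw [map_zero, norm_zero] at hTx
    linarith only [hTx, hε1]
  have hxpos : 0 < ‖x‖ := norm_pos_iff.mpr hx0
  set x₀ : X := ‖x‖⁻¹ • x with hx₀def
  have hx₀ : ‖x₀‖ = 1 := by
    rw [hx₀def, norm_smul, norm_inv, norm_norm, inv_mul_cancel₀ hxpos.ne']
  have hTx₀ : 1 - ε < ‖T x₀‖ := by
    rw [hx₀def, T.map_smul_of_tower, norm_smul, norm_inv, norm_norm]
    calc (1:ℝ) - ε < ‖T x‖ := hTx
      _ ≤ ‖x‖⁻¹ * ‖T x‖ :=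
        le_mul_of_one_le_left (norm_nonneg _) ((one_le_inv₀ hxpos).mpr hxlt.le)
  have hTx₀' : ‖T x₀‖ ≤ 1 := by
    calc ‖T x₀‖ ≤ ‖T‖ * ‖x₀‖ := T.le_opNorm x₀
      _ = 1 := by rw [hT, hx₀, one_mul]
  have hTx₀pos : 0 < ‖T x₀‖ := by linarith only [hTx₀, hε1]
  set y : X := ‖T x₀‖⁻¹ • (T x₀) with hydef
  have hy : ‖y‖ = 1 := by
    rw [hydef, norm_smul, norm_inv, norm_norm, inv_mul_cancel₀ hTx₀pos.ne']
  obtain ⟨f, hf, hyf, hdist⟩ := h x₀ y hx₀ hy ε hε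
  have hfy : 1 - ε < RCLike.re (f y) := hyf.2
  have hfTx₀ : (1-ε)*(1-ε) < RCLike.re (f (T x₀)) := by
    have hTy : T x₀ = ‖T x₀‖ • y := by rw [hydef, smul_inv_smul₀ hTx₀pos.ne']
    rw [hTy, f.map_smul_of_tower, RCLike.smul_re]
    exact mul_lt_mul'' hTx₀ hfy (by linarith only [hε1]) (by linarith only [hε1])
  have hyD : y ∈ {z : X | ∃ (θ : 𝕜) (w : X), ‖θ‖ = 1 ∧ w ∈ lushSlice f ε ∧ z = θ • w} :=
    ⟨1, y, by simp, hyf, (one_smul 𝕜 y).symm⟩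
  have hne : (convexHull ℝ {z : X | ∃ (θ : 𝕜) (w : X),
      ‖θ‖ = 1 ∧ w ∈ lushSlice f ε ∧ z = θ • w}).Nonempty :=
    ⟨y, subset_convexHull ℝ _ hyD⟩
  rw [Metric.infDist_lt_iff hne] at hdist
  obtain ⟨z, hzD, hzdist⟩ := hdist
  -- `Re f (T z)` is large
  have hfTz : 1 - 3*ε + ε*ε < RCLike.re (f (T z)) := by
    have h1 : ‖T (x₀ - z)‖ ≤ ‖x₀ - z‖ := by
      simpa [hT] using T.le_opNorm (x₀ - z)
    have h2 : ‖f (T (x₀ - z))‖ ≤ ‖T (x₀ - z)‖ := by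
      simpa [hf] using f.le_opNorm (T (x₀ - z))
    have h3 : ‖x₀ - z‖ ≤ ε := by rw [← dist_eq_norm]; exact hzdist.le
    have h4 : RCLike.re (f (T x₀)) - RCLike.re (f (T z)) ≤ ε := by
      have h6 : f (T x₀) - f (T z) = f (T (x₀ - z)) := by rw [map_sub, map_sub]
      have h5 : RCLike.re (f (T x₀) - f (T z)) ≤ ε := by
        rw [h6]; exact (RCLike.re_le_norm _).trans (h2.trans (h1.trans h3))
      rw [map_sub] at h5
      linarith only [h5]
    have hexp : (1-ε)*(1-ε) = 1 - 2*ε + ε*ε := by ring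
    linarith only [hfTx₀, h4, hexp]
  -- find a slice point `w` with `‖f (T w)‖` large
  have hDw : ∃ w ∈ lushSlice f ε, 1 - 3*ε ≤ ‖f (T w)‖ := by
    by_contra hcon
    push_neg at hcon
    have hlin : IsLinearMap ℝ (fun v : X => RCLike.re (f (T v))) := by
      constructor
      · intro a b; simp [map_add]
      · intro c a
        rw [T.map_smul_of_tower, f.map_smul_of_tower, RCLike.smul_re, smul_eq_mul]
    have hconv : Convex ℝ {v : X | RCLike.re (f (T v)) ≤ 1 - 3*ε} :=
      convex_halfSpace_le hlin _
    have hsub : convexHull ℝ {z : X | ∃ (θ : 𝕜) (w : X),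
        ‖θ‖ = 1 ∧ w ∈ lushSlice f ε ∧ z = θ • w} ⊆
        {v : X | RCLike.re (f (T v)) ≤ 1 - 3*ε} := by
      apply convexHull_min ?_ hconv
      rintro d ⟨θ, w, hθ, hwslice, rfl⟩
      have heq : ‖f (T (θ • w))‖ = ‖f (T w)‖ := by
        rw [map_smul, map_smul, norm_smul, hθ, one_mul]
      calc RCLike.re (f (T (θ • w))) ≤ ‖f (T (θ • w))‖ := RCLike.re_le_norm _
        _ = ‖f (T w)‖ := heq
        _ ≤ 1 - 3*ε := (hcon w hwslice).le
    have hmem := hsub hzD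
    simp only [Set.mem_setOf_eq] at hmem
    linarith only [hmem, hfTz, mul_pos hε hε]
  obtain ⟨w, hwslice, hfTw⟩ := hDw
  obtain ⟨hw1, hw2⟩ := hwslice
  set c : 𝕜 := f (T w) with hcdef
  have hcpos : (0:ℝ) < ‖c‖ := by linarith only [hfTw, hε1]
  have hcK : ((‖c‖ : ℝ) : 𝕜) ≠ 0 := RCLike.ofReal_ne_zero.mpr hcpos.ne'
  set θ' : 𝕜 := (starRingEnd 𝕜) c / (‖c‖ : 𝕜) with hθdef
  have hθn : ‖θ'‖ = 1 := by
    rw [hθdef, norm_div, RCLike.norm_conj, RCLike.norm_ofReal, abs_of_pos hcpos,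
      div_self hcpos.ne']
  have hθc : θ' * c = (‖c‖ : 𝕜) := by
    rw [hθdef, div_mul_eq_mul_div, RCLike.conj_mul, pow_two, mul_div_assoc,
      div_self hcK, mul_one]
  set p : X := w + s • (θ' • T w) with hpdef
  have hTw1 : ‖T w‖ ≤ 1 := by
    calc ‖T w‖ ≤ ‖T‖ * ‖w‖ := T.le_opNorm w
      _ ≤ 1 := by rw [hT, one_mul]; exact hw1
  have hfp : RCLike.re (f p) = RCLike.re (f w) + s * ‖c‖ := by
    rw [hpdef, map_add, f.map_smul_of_tower, map_smul, smul_eq_mul, ← hcdef, hθc,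
      map_add, RCLike.smul_re, RCLike.ofReal_re]
  set M : ℝ := ‖p‖ with hMdef
  have hM1 : 1 - ε + s*(1-3*ε) < M := by
    have h1 : RCLike.re (f p) ≤ M := by
      calc RCLike.re (f p) ≤ ‖f p‖ := RCLike.re_le_norm _
        _ ≤ ‖f‖ * ‖p‖ := f.le_opNorm p
        _ = M := by rw [hf, one_mul]
    have h2 : s*(1-3*ε) ≤ s*‖c‖ := mul_le_mul_of_nonneg_left hfTw hs.le
    linarith only [hfp ▸ h1, h2, hw2]
  have hsq : s^2 ≤ 1/100 := by
    have h := mul_le_mul hs1 hs1 hs.le (by norm_num : (0:ℝ) ≤ 1/10)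
    have h2 : s^2 = s*s := by ring
    linarith only [h, h2]
  have hM0 : 1 < M := by
    have h1 : s < 1 - 3*s^2 := by linarith only [hsq, hs1]
    have h2 : s*s < s*(1-3*s^2) := mul_lt_mul_of_pos_left h1 hs
    have h3 : ε < s*(1-3*ε) := by
      rw [← hs2]
      have h4 : s^2 = s*s := by ring
      linarith only [h2, h4]
    linarith only [hM1, h3]
  have hMpos : (0:ℝ) < M := by linarith only [hM0]
  have hp0 : p ≠ 0 := by
    intro h0
    rw [hMdef, h0, norm_zero] at hM0
    linarith only [hM0]
  obtain ⟨g, hg1, hg2⟩ := exists_dual_vector 𝕜 p (norm_ne_zero_iff.mpr hp0)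
  set x' : X := (M⁻¹ : ℝ) • p with hx'def
  have hx'1 : ‖x'‖ = 1 := by
    rw [hx'def, norm_smul, norm_inv, Real.norm_eq_abs, abs_of_pos hMpos,
      inv_mul_cancel₀ hMpos.ne']
  have hMK : ((M : ℝ) : 𝕜) ≠ 0 := RCLike.ofReal_ne_zero.mpr hMpos.ne'
  have hgx' : g x' = 1 := by
    rw [hx'def, g.map_smul_of_tower, hg2, ← hMdef, RCLike.real_smul_eq_coe_mul,
      RCLike.ofReal_inv, inv_mul_cancel₀ hMK]
  have hgw : RCLike.re (g w) ≤ 1 := by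
    calc RCLike.re (g w) ≤ ‖g w‖ := RCLike.re_le_norm _
      _ ≤ ‖g‖ * ‖w‖ := g.le_opNorm w
      _ ≤ 1 := by rw [hg1, one_mul]; exact hw1
  have hkey : M - 1 ≤ s * RCLike.re (θ' * g (T w)) := by
    have hgp : RCLike.re (g p) = RCLike.re (g w) + s * RCLike.re (θ' * g (T w)) := by
      rw [hpdef, map_add, g.map_smul_of_tower, map_smul, smul_eq_mul, map_add,
        RCLike.smul_re]
    have hgpM : RCLike.re (g p) = M := by rw [hg2, ← hMdef, RCLike.ofReal_re]
    linarith only [hgp, hgpM, hgw]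
  have hgT2 : ‖g (T (T w))‖ ≤ 1 := by
    calc ‖g (T (T w))‖ ≤ ‖g‖ * ‖T (T w)‖ := g.le_opNorm _
      _ ≤ 1 := by
        rw [hg1, one_mul]
        calc ‖T (T w)‖ ≤ ‖T‖ * ‖T w‖ := T.le_opNorm _
          _ ≤ 1 := by rw [hT, one_mul]; exact hTw1
  have hgTp : θ' * g (T p) = θ' * g (T w) + s • (θ' * (θ' * g (T (T w)))) := by
    rw [hpdef, map_add, T.map_smul_of_tower, map_smul, map_add, g.map_smul_of_tower,
      map_smul, smul_eq_mul, mul_add, mul_smul_comm]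
  have hre2 : (M-1)/s - s ≤ RCLike.re (θ' * g (T p)) := by
    rw [hgTp, map_add, RCLike.smul_re]
    have h1 : -1 ≤ RCLike.re (θ' * (θ' * g (T (T w)))) := by
      have hb : ‖θ' * (θ' * g (T (T w)))‖ ≤ 1 := by
        rw [norm_mul, norm_mul, hθn, one_mul, one_mul]; exact hgT2
      have ha := RCLike.abs_re_le_norm (θ' * (θ' * g (T (T w))))
      have hab := abs_le.mp (ha.trans hb)
      linarith only [hab.1]
    have h2 : (M-1)/s ≤ RCLike.re (θ' * g (T w)) :=
      (div_le_iff₀ hs).mpr (by linarith only [hkey])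
    have h3 : s * (-1) ≤ s * RCLike.re (θ' * (θ' * g (T (T w)))) :=
      mul_le_mul_of_nonneg_left h1 hs.le
    linarith only [h2, h3]
  have hTp : g (T x') = (M⁻¹ : ℝ) • g (T p) := by
    rw [hx'def, T.map_smul_of_tower, g.map_smul_of_tower]
  have hnorm1 : ‖g (T x')‖ = M⁻¹ * ‖g (T p)‖ := by
    rw [hTp, norm_smul, norm_inv, Real.norm_eq_abs, abs_of_pos hMpos]
  have hnorm2 : (M-1)/s - s ≤ ‖g (T p)‖ := by
    calc (M-1)/s - s ≤ RCLike.re (θ' * g (T p)) := hre2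
      _ ≤ ‖θ' * g (T p)‖ := RCLike.re_le_norm _
      _ = ‖g (T p)‖ := by rw [norm_mul, hθn, one_mul]
  refine ⟨x', g, hx'1, hg1, hgx', ?_⟩
  rw [hnorm1]
  have hM1' : 1 - s^2 + s*(1-3*s^2) < M := by rw [hs2]; exact hM1
  have hchain : 1 - δ < M⁻¹ * ((M-1)/s - s) := good_pair_arith hδ hs hs1 hδs hM1'
  calc 1 - δ < M⁻¹ * ((M-1)/s - s) := hchain
    _ ≤ M⁻¹ * ‖g (T p)‖ := mul_le_mul_of_nonneg_left hnorm2 (by positivity)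

lemma numRadius_eq_one_of_isLush (h : IsLush 𝕜 X) (T : X →L[𝕜] X) (hT : ‖T‖ = 1) :
    numRadius 𝕜 T = 1 := by
  have hub : ∀ r ∈ {r : ℝ | ∃ (x : X) (f : X →L[𝕜] 𝕜),
      ‖x‖ = 1 ∧ ‖f‖ = 1 ∧ f x = 1 ∧ r = ‖f (T x)‖}, r ≤ 1 := by
    rintro r ⟨x, f, hx, hf, -, rfl⟩
    calc ‖f (T x)‖ ≤ ‖f‖ * ‖T x‖ := f.le_opNorm _
      _ ≤ 1 * (‖T‖ * ‖x‖) := by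
        rw [hf, one_mul, one_mul]; exact T.le_opNorm x
      _ = 1 := by rw [hT, hx, one_mul, one_mul]
  have hbdd : BddAbove {r : ℝ | ∃ (x : X) (f : X →L[𝕜] 𝕜),
      ‖x‖ = 1 ∧ ‖f‖ = 1 ∧ f x = 1 ∧ r = ‖f (T x)‖} := ⟨1, hub⟩
  obtain ⟨x₁, g₁, hx₁, hg₁, hgx₁, -⟩ := exists_good_pair h T hT one_pos
  have hne : {r : ℝ | ∃ (x : X) (f : X →L[𝕜] 𝕜),
      ‖x‖ = 1 ∧ ‖f‖ = 1 ∧ f x = 1 ∧ r = ‖f (T x)‖}.Nonempty :=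
    ⟨‖g₁ (T x₁)‖, x₁, g₁, hx₁, hg₁, hgx₁, rfl⟩
  unfold numRadius
  apply le_antisymm (csSup_le hne hub)
  by_contra hlt
  push_neg at hlt
  obtain ⟨x₂, g₂, hx₂, hg₂, hgx₂, hval₂⟩ :=
    exists_good_pair h T hT (δ := 1 - sSup {r : ℝ | ∃ (x : X) (f : X →L[𝕜] 𝕜),
      ‖x‖ = 1 ∧ ‖f‖ = 1 ∧ f x = 1 ∧ r = ‖f (T x)‖}) (by linarith only [hlt])
  have hle : ‖g₂ (T x₂)‖ ≤ sSup {r : ℝ | ∃ (x : X) (f : X →L[𝕜] 𝕜),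
      ‖x‖ = 1 ∧ ‖f‖ = 1 ∧ f x = 1 ∧ r = ‖f (T x)‖} :=
    le_csSup hbdd ⟨x₂, g₂, hx₂, hg₂, hgx₂, rfl⟩
  linarith only [hle, hval₂]

end Aux

/-- A nonzero lush Banach space has numerical index 1. -/
theorem numIndex_eq_one_of_isLush (𝕜 X : Type*) [RCLike 𝕜] [NormedAddCommGroup X]
    [NormedSpace 𝕜 X] [NormedSpace ℝ X] [IsScalarTower ℝ 𝕜 X] [CompleteSpace X]
    [Nontrivial X] (h : IsLush 𝕜 X) : numIndex 𝕜 X = 1 := by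
  have hid : ‖ContinuousLinearMap.id 𝕜 X‖ = 1 := ContinuousLinearMap.norm_id
  have hset : {r : ℝ | ∃ T : X →L[𝕜] X, ‖T‖ = 1 ∧ r = numRadius 𝕜 T} = {1} := by
    ext r
    constructor
    · rintro ⟨T, hT, rfl⟩
      exact numRadius_eq_one_of_isLush h T hT
    · rintro hr
      rw [Set.mem_singleton_iff] at hr
      subst hr
      exact ⟨ContinuousLinearMap.id 𝕜 X, hid,
        (numRadius_eq_one_of_isLush h _ hid).symm⟩
  unfold numIndex
  rw [hset, csInf_singleton]
end

section
/- Let K be a compact Hausdorff space and let X be a C-rich closed subspace of C(K) (real or complex scalars). Then X is lush. -/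
open Filter Topology Metric

/-- A closed subspace `X` of `C(K)` is *C-rich* if for every nonempty open `U ⊆ K` and every
`ε > 0` there is a norm-one nonnegative function supported in `U` at distance less than `ε`
from `X`. -/
def IsCRich {K 𝕜 : Type*} [TopologicalSpace K] [CompactSpace K] [T2Space K] [RCLike 𝕜]
    (X : Submodule 𝕜 C(K, 𝕜)) : Prop :=
  ∀ U : Set K, IsOpen U → U.Nonempty → ∀ ε : ℝ, 0 < ε →
    ∃ h : C(K, 𝕜), ‖h‖ = 1 ∧ (∀ t, 0 ≤ RCLike.re (h t) ∧ RCLike.im (h t) = 0) ∧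
      Function.support ⇑h ⊆ U ∧ Metric.infDist h (X : Set C(K, 𝕜)) < ε

open RCLike in
lemma exists_unimodular_combo {𝕜 : Type*} [RCLike 𝕜] (c : 𝕜) (hc : ‖c‖ ≤ 1) :
    ∃ θ₁ θ₂ : 𝕜, ∃ l : ℝ, ‖θ₁‖ = 1 ∧ ‖θ₂‖ = 1 ∧ 0 ≤ l ∧ l ≤ 1 ∧
      (l : 𝕜) * θ₁ + ((1 - l : ℝ) : 𝕜) * θ₂ = c := by
  rcases @I_mul_I_ax 𝕜 _ with hI | hI
  · have hre : ∀ z : 𝕜, ((re z : ℝ) : 𝕜) = z := by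
      intro z
      conv_rhs => rw [← re_add_im z]
      rw [hI, mul_zero, add_zero]
    have habs : |re c| ≤ 1 := (abs_re_le_norm c).trans hc
    refine ⟨1, -1, (1 + re c) / 2, by simp, by simp, by linarith [abs_le.1 habs],
      by linarith [abs_le.1 habs], ?_⟩
    rw [mul_one, mul_neg_one, ← hre c]
    push_cast
    ring
  · set a : ℝ := ‖c‖ with ha
    set b : ℝ := Real.sqrt (1 - a ^ 2) with hb
    have ha0 : 0 ≤ a := norm_nonneg c
    have hab : a ^ 2 + b ^ 2 = 1 := by
      rw [hb, Real.sq_sqrt (by nlinarith)]; ring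
    set u : 𝕜 := if c = 0 then 1 else (((a⁻¹ : ℝ) : 𝕜) * c) with hu
    have hunorm : ‖u‖ = 1 := by
      rw [hu]
      split_ifs with h
      · simp
      · rw [norm_mul, norm_ofReal, abs_inv, abs_of_nonneg ha0, ← ha,
          inv_mul_cancel₀ (by simpa [ha] using h)]
    have huc : u * (a : 𝕜) = c := by
      rw [hu]
      split_ifs with h
      · simp [h, ha]
      · rw [mul_comm, ← mul_assoc, ← ofReal_mul,
          mul_inv_cancel₀ (by simpa [ha] using h)]
        simp
    have key : ∀ e : 𝕜, e * e = 1 → (starRingEnd 𝕜) e = e →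
        ‖(a : 𝕜) + e * (b : 𝕜) * I‖ = 1 := by
      intro e he hce
      set z : 𝕜 := (a : 𝕜) + e * (b : 𝕜) * I with hz
      have hcz : (starRingEnd 𝕜) z = (a : 𝕜) - e * (b : 𝕜) * I := by
        rw [hz, map_add, map_mul, map_mul, conj_ofReal, conj_ofReal, conj_I, hce]
        ring
      have h1 : z * (starRingEnd 𝕜) z = ((a ^ 2 + b ^ 2 : ℝ) : 𝕜) := by
        calc z * (starRingEnd 𝕜) z
            = (a : 𝕜) ^ 2 - (e * e) * ((b : 𝕜) ^ 2) * (I * I) := by rw [hcz, hz]; ring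
          _ = ((a ^ 2 + b ^ 2 : ℝ) : 𝕜) := by rw [he, hI]; push_cast; ring
      have h2 : ((‖z‖ : 𝕜)) ^ 2 = ((a ^ 2 + b ^ 2 : ℝ) : 𝕜) := by
        rw [← mul_conj z, h1]
      have h3 : ‖z‖ ^ 2 = a ^ 2 + b ^ 2 := by exact_mod_cast h2
      nlinarith [norm_nonneg z, hab]
    have hn1 : ‖u * ((a : 𝕜) + 1 * (b : 𝕜) * I)‖ = 1 := by
      rw [norm_mul, hunorm, key 1 (by ring) (by simp), one_mul]
    have hn2 : ‖u * ((a : 𝕜) + (-1) * (b : 𝕜) * I)‖ = 1 := by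
      rw [norm_mul, hunorm, key (-1) (by ring) (by simp), one_mul]
    refine ⟨u * ((a : 𝕜) + 1 * (b : 𝕜) * I), u * ((a : 𝕜) + (-1) * (b : 𝕜) * I),
      1 / 2, hn1, hn2, by norm_num, by norm_num, ?_⟩
    rw [← huc]
    push_cast
    ring

set_option maxHeartbeats 1000000 in
/-- A C-rich closed subspace of C(K), K compact Hausdorff, is lush. -/
theorem isLush_of_isCRich {K 𝕜 : Type*} [TopologicalSpace K] [CompactSpace K] [T2Space K]
    [RCLike 𝕜] (X : Submodule 𝕜 C(K, 𝕜)) (hclosed : IsClosed (X : Set C(K, 𝕜)))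
    (hrich : IsCRich X) : IsLush 𝕜 ↥X := by
  intro x y hx hy ε hε
  haveI : NormSMulClass 𝕜 (↥X →L[𝕜] 𝕜) := @NormedSpace.toNormSMulClass 𝕜 (↥X →L[𝕜] 𝕜) _ _ _
  haveI : IsBoundedSMul 𝕜 ↥X := NormSMulClass.toIsBoundedSMul (α := 𝕜) (β := ↥X)
  set δ : ℝ := min ε 1 / 8 with hδdef
  have hδ0 : 0 < δ := by
    have := lt_min hε one_pos
    rw [hδdef]; linarith
  have hδε : 8 * δ ≤ ε := by
    have := min_le_left ε 1
    rw [hδdef]; linarith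
  have hδ1 : δ ≤ 1 / 8 := by
    have := min_le_right ε 1
    rw [hδdef]; linarith
  clear_value δ
  clear hδdef
  have hxc : ‖(x : C(K, 𝕜))‖ = 1 := hx
  have hyc : ‖(y : C(K, 𝕜))‖ = 1 := hy
  -- a point where ‖y‖ is nearly attained
  obtain ⟨t₁, ht₁⟩ : ∃ t, 1 - δ < ‖(y : C(K, 𝕜)) t‖ := by
    by_contra hcon
    push_neg at hcon
    have : ‖(y : C(K, 𝕜))‖ ≤ 1 - δ :=
      (ContinuousMap.norm_le _ (by linarith)).2 hcon
    rw [hyc] at this; linarith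
  -- the open set U
  set U : Set K := {t | 1 - δ < ‖(y : C(K, 𝕜)) t‖} ∩
      {t | ‖(x : C(K, 𝕜)) t - (x : C(K, 𝕜)) t₁‖ < δ} with hUdef
  have hUopen : IsOpen U := by
    refine IsOpen.inter ?_ ?_
    · exact isOpen_lt continuous_const ((y : C(K, 𝕜)).continuous.norm)
    · exact isOpen_lt (((x : C(K, 𝕜)).continuous.sub continuous_const).norm) continuous_const
  have hUne : U.Nonempty := ⟨t₁, ht₁, by simpa using hδ0⟩
  have hUmem : ∀ t, t ∈ U →
      1 - δ < ‖(y : C(K, 𝕜)) t‖ ∧ ‖(x : C(K, 𝕜)) t - (x : C(K, 𝕜)) t₁‖ < δ :=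
    fun t ht => ⟨ht.1, ht.2⟩
  clear_value U
  clear hUdef
  -- C-richness
  obtain ⟨h, hh1, hhval, hhsupp, hhdist⟩ := hrich U hUopen hUne δ hδ0
  obtain ⟨g, hgX, hgdist⟩ := (Metric.infDist_lt_iff ⟨0, X.zero_mem⟩).1 hhdist
  -- h is real-valued with values in [0,1]
  have hreal : ∀ t, h t = ((RCLike.re (h t) : ℝ) : 𝕜) := by
    intro t
    exact (RCLike.ext (by simp) (by simp [(hhval t).2])).symm
  have hnormht : ∀ t, ‖h t‖ = RCLike.re (h t) := by
    intro t
    conv_lhs => rw [hreal t]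
    rw [RCLike.norm_ofReal, abs_of_nonneg (hhval t).1]
  -- the point t₀ where h attains its norm
  haveI : Nonempty K := ⟨t₁⟩
  obtain ⟨t₀, -, hmax⟩ := isCompact_univ.exists_isMaxOn (Set.univ_nonempty (α := K))
    ((map_continuous h).norm.continuousOn (s := Set.univ))
  have hht₀ : ‖h t₀‖ = 1 := by
    refine le_antisymm (hh1 ▸ h.norm_coe_le_norm t₀) ?_
    have : ‖h‖ ≤ ‖h t₀‖ :=
      (ContinuousMap.norm_le _ (norm_nonneg _)).2 fun t => hmax (Set.mem_univ t)
    linarith [hh1 ▸ this]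
  have hht₀1 : h t₀ = 1 := by
    have h1 : RCLike.re (h t₀) = 1 := by rw [← hnormht t₀, hht₀]
    rw [hreal t₀, h1]; simp
  have ht₀U : t₀ ∈ U := hhsupp (by simp [Function.mem_support, hht₀1])
  have ht₀y : 1 - δ < ‖(y : C(K, 𝕜)) t₀‖ := (hUmem t₀ ht₀U).1
  have ht₀x : ‖(x : C(K, 𝕜)) t₀ - (x : C(K, 𝕜)) t₁‖ < δ := (hUmem t₀ ht₀U).2
  -- the functional
  set ρ : ℝ := ‖(y : C(K, 𝕜)) t₀‖ with hρdef
  have hρ0 : 0 < ρ := by rw [hρdef]; linarith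
  have hρ1 : ρ ≤ 1 := hyc ▸ (y : C(K, 𝕜)).norm_coe_le_norm t₀
  set s : 𝕜 := ((ρ⁻¹ : ℝ) : 𝕜) * (y : C(K, 𝕜)) t₀ with hsdef
  have hsnorm : ‖s‖ = 1 := by
    rw [hsdef, norm_mul, RCLike.norm_ofReal, abs_inv, abs_of_pos hρ0, ← hρdef,
      inv_mul_cancel₀ hρ0.ne']
  set ψ : ↥X →L[𝕜] 𝕜 :=
    (starRingEnd 𝕜 s) • ((ContinuousMap.evalCLM 𝕜 t₀).comp X.subtypeL) with hψdef
  have hψapp : ∀ z : ↥X, ψ z = (starRingEnd 𝕜 s) * (z : C(K, 𝕜)) t₀ := fun z => rfl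
  have hψle : ‖ψ‖ ≤ 1 := by
    refine ψ.opNorm_le_bound zero_le_one fun z => ?_
    rw [hψapp, norm_mul, RCLike.norm_conj, hsnorm, one_mul, one_mul]
    exact (z : C(K, 𝕜)).norm_coe_le_norm t₀
  have hψy : ψ y = ((ρ : ℝ) : 𝕜) := by
    rw [hψapp, hsdef, map_mul, RCLike.conj_ofReal, mul_assoc, RCLike.conj_mul, ← hρdef]
    rw [← RCLike.ofReal_pow, ← RCLike.ofReal_mul]
    congr 1
    field_simp
  clear_value ρ s ψ
  clear hρdef hsdef hψdef
  set ν : ℝ := ‖ψ‖ with hνdef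
  have hνρ : ρ ≤ ν := by
    have h1 : ‖ψ y‖ ≤ ν * ‖y‖ := ψ.le_opNorm y
    rw [hψy, RCLike.norm_ofReal, abs_of_pos hρ0, hy, mul_one] at h1
    exact h1
  have hν0 : 0 < ν := lt_of_lt_of_le hρ0 hνρ
  have hν1 : ν ≤ 1 := hψle
  set f : ↥X →L[𝕜] 𝕜 := ((ν⁻¹ : ℝ) : 𝕜) • ψ with hfdef
  have hfnorm : ‖f‖ = 1 := by
    have h1 : ‖f‖ = ‖((ν⁻¹ : ℝ) : 𝕜)‖ * ‖ψ‖ := by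
      rw [hfdef]; exact norm_smul (((ν⁻¹ : ℝ) : 𝕜)) ψ
    rw [RCLike.norm_ofReal, abs_inv, abs_of_pos hν0] at h1
    rw [h1, ← hνdef, inv_mul_cancel₀ hν0.ne']
  have hfapp : ∀ z : ↥X, f z = ((ν⁻¹ : ℝ) : 𝕜) * ψ z := fun z => rfl
  have hν1' : 1 ≤ ν⁻¹ := one_le_inv₀ hν0 |>.2 hν1
  clear_value ν f
  clear hνdef hfdef
  -- the convex decomposition
  set c : 𝕜 := (x : C(K, 𝕜)) t₀ with hcdef
  have hc1 : ‖c‖ ≤ 1 := hxc ▸ (x : C(K, 𝕜)).norm_coe_le_norm t₀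
  obtain ⟨θ₁, θ₂, l, hθ₁, hθ₂, hl0, hl1, hcombo⟩ := exists_unimodular_combo c hc1
  set g' : ↥X := ⟨g, hgX⟩ with hg'def
  set Z : 𝕜 → ↥X := fun θ => x + (θ - c) • g' with hZdef
  have hZeq : ∀ θ : 𝕜, Z θ = x + (θ - c) • g' := fun θ => rfl
  have hZapp : ∀ θ t, ((Z θ : ↥X) : C(K, 𝕜)) t = (x : C(K, 𝕜)) t + (θ - c) * g t := by
    intro θ t
    simp [hZdef, hg'def]
  clear_value g' Z
  clear hZdef hg'def
  have hgh : ∀ t : K, ‖g t - h t‖ ≤ δ := by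
    intro t
    calc ‖g t - h t‖ = dist (h t) (g t) := by rw [dist_comm, dist_eq_norm]
      _ ≤ dist h g := ContinuousMap.dist_apply_le_dist t
      _ ≤ δ := hgdist.le
  have hr01 : ∀ t : K, 0 ≤ RCLike.re (h t) ∧ RCLike.re (h t) ≤ 1 := by
    intro t
    refine ⟨(hhval t).1, ?_⟩
    rw [← hnormht t]
    exact hh1 ▸ h.norm_coe_le_norm t
  -- pointwise norm bound for Z θ
  have hZptwise : ∀ θ : 𝕜, ‖θ‖ = 1 → ∀ t : K,
      ‖(x : C(K, 𝕜)) t + (θ - c) * g t‖ ≤ 1 + 4 * δ := by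
    intro θ hθ t
    have hθc : ‖θ - c‖ ≤ 2 := by
      calc ‖θ - c‖ ≤ ‖θ‖ + ‖c‖ := norm_sub_le _ _
        _ ≤ 2 := by rw [hθ]; linarith
    have e2 : ‖(θ - c) * (g t - h t)‖ ≤ 2 * δ := by
      rw [norm_mul]
      exact mul_le_mul hθc (hgh t) (norm_nonneg _) (by norm_num)
    have e1 : (x : C(K, 𝕜)) t + (θ - c) * g t
        = ((x : C(K, 𝕜)) t + (θ - c) * h t) + (θ - c) * (g t - h t) := by ring
    rw [e1]
    refine (norm_add_le _ _).trans ?_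
    have main : ‖(x : C(K, 𝕜)) t + (θ - c) * h t‖ ≤ 1 + 2 * δ := by
      by_cases hzero : h t = 0
      · rw [hzero, mul_zero, add_zero]
        have : ‖(x : C(K, 𝕜)) t‖ ≤ 1 := hxc ▸ (x : C(K, 𝕜)).norm_coe_le_norm t
        linarith
      · have htU : t ∈ U := hhsupp hzero
        set r : ℝ := RCLike.re (h t) with hrdef
        have hr0 : 0 ≤ r := (hr01 t).1
        have hr1 : r ≤ 1 := (hr01 t).2
        have e3 : (x : C(K, 𝕜)) t + (θ - c) * h t
            = (c * ((1 - r : ℝ) : 𝕜) + θ * ((r : ℝ) : 𝕜)) + ((x : C(K, 𝕜)) t - c) := by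
          rw [hreal t, ← hrdef]
          push_cast
          ring
        have e4 : ‖c * ((1 - r : ℝ) : 𝕜) + θ * ((r : ℝ) : 𝕜)‖ ≤ 1 := by
          refine (norm_add_le _ _).trans ?_
          rw [norm_mul, norm_mul, RCLike.norm_ofReal, RCLike.norm_ofReal,
            abs_of_nonneg (by linarith : (0:ℝ) ≤ 1 - r), abs_of_nonneg hr0, hθ, one_mul]
          have h6 : ‖c‖ * (1 - r) ≤ 1 * (1 - r) :=
            mul_le_mul_of_nonneg_right hc1 (by linarith)
          linarith
        have e5 : ‖(x : C(K, 𝕜)) t - c‖ ≤ 2 * δ := by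
          have h2 : ‖(x : C(K, 𝕜)) t - (x : C(K, 𝕜)) t₁‖ < δ := (hUmem t htU).2
          calc ‖(x : C(K, 𝕜)) t - c‖
              = ‖((x : C(K, 𝕜)) t - (x : C(K, 𝕜)) t₁) - ((x : C(K, 𝕜)) t₀ - (x : C(K, 𝕜)) t₁)‖ := by
                rw [hcdef]; congr 1; ring
            _ ≤ ‖(x : C(K, 𝕜)) t - (x : C(K, 𝕜)) t₁‖ + ‖(x : C(K, 𝕜)) t₀ - (x : C(K, 𝕜)) t₁‖ :=
                norm_sub_le _ _
            _ ≤ 2 * δ := by linarith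
        calc ‖(x : C(K, 𝕜)) t + (θ - c) * h t‖
            ≤ ‖c * ((1 - r : ℝ) : 𝕜) + θ * ((r : ℝ) : 𝕜)‖ + ‖(x : C(K, 𝕜)) t - c‖ := by
              rw [e3]; exact norm_add_le _ _
          _ ≤ 1 + 2 * δ := by linarith
    linarith
  have hZnorm : ∀ θ : 𝕜, ‖θ‖ = 1 → ‖Z θ‖ ≤ 1 + 4 * δ := by
    intro θ hθ
    have : ‖((Z θ : ↥X) : C(K, 𝕜))‖ ≤ 1 + 4 * δ := by
      refine (ContinuousMap.norm_le _ (by linarith)).2 fun t => ?_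
      rw [hZapp]
      exact hZptwise θ hθ t
    exact this
  have hZt₀ : ∀ θ : 𝕜, ‖θ‖ = 1 → ‖((Z θ : ↥X) : C(K, 𝕜)) t₀ - θ‖ ≤ 2 * δ := by
    intro θ hθ
    have e0 : ((Z θ : ↥X) : C(K, 𝕜)) t₀ - θ = (θ - c) * (g t₀ - h t₀) := by
      rw [hZapp, hht₀1, ← hcdef]
      ring
    rw [e0, norm_mul]
    have hθc : ‖θ - c‖ ≤ 2 := by
      calc ‖θ - c‖ ≤ ‖θ‖ + ‖c‖ := norm_sub_le _ _
        _ ≤ 2 := by rw [hθ]; linarith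
    exact mul_le_mul hθc (hgh t₀) (norm_nonneg _) (by norm_num)
  clear_value c
  clear hcdef
  -- the slice elements W θ
  set M : ℝ := 1 + 4 * δ with hMdef
  have hM1 : (1 : ℝ) ≤ M := by rw [hMdef]; linarith
  have hM0 : (0 : ℝ) < M := by linarith
  have hZnorm' : ∀ θ : 𝕜, ‖θ‖ = 1 → ‖Z θ‖ ≤ M := by
    intro θ hθ; rw [hMdef]; exact hZnorm θ hθ
  clear_value M
  set W : 𝕜 → ↥X := fun θ => ((starRingEnd 𝕜 θ) * s * ((M⁻¹ : ℝ) : 𝕜)) • Z θ with hWdef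
  have hWeq : ∀ θ : 𝕜, W θ = ((starRingEnd 𝕜 θ) * s * ((M⁻¹ : ℝ) : 𝕜)) • Z θ := fun θ => rfl
  clear_value W
  clear hWdef
  have hWnorm : ∀ θ : 𝕜, ‖θ‖ = 1 → ‖W θ‖ ≤ 1 := by
    intro θ hθ
    have h1 : ‖W θ‖ = ‖(starRingEnd 𝕜 θ) * s * ((M⁻¹ : ℝ) : 𝕜)‖ * ‖Z θ‖ := by
      rw [hWeq θ]; exact norm_smul ((starRingEnd 𝕜 θ) * s * ((M⁻¹ : ℝ) : 𝕜)) (Z θ)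
    rw [norm_mul, norm_mul, RCLike.norm_conj, hθ, hsnorm, one_mul, one_mul,
      RCLike.norm_ofReal, abs_inv, abs_of_pos hM0] at h1
    rw [h1]
    calc M⁻¹ * ‖Z θ‖ ≤ M⁻¹ * M :=
          mul_le_mul_of_nonneg_left (hZnorm' θ hθ) (inv_nonneg.2 hM0.le)
      _ = 1 := inv_mul_cancel₀ hM0.ne'
  have hsconj : (starRingEnd 𝕜) s * s = 1 := by
    rw [RCLike.conj_mul, hsnorm]; norm_num
  have hfW : ∀ θ : 𝕜, ‖θ‖ = 1 → 1 - ε < RCLike.re (f (W θ)) := by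
    intro θ hθ
    have hWcoe : ((W θ : ↥X) : C(K, 𝕜)) t₀
        = ((starRingEnd 𝕜 θ) * s * ((M⁻¹ : ℝ) : 𝕜)) * ((Z θ : ↥X) : C(K, 𝕜)) t₀ := by
      rw [hWeq θ]
      simp
    have happ : f (W θ)
        = (((ν⁻¹ : ℝ) : 𝕜) * ((M⁻¹ : ℝ) : 𝕜)) * ((starRingEnd 𝕜 θ) * ((Z θ : ↥X) : C(K, 𝕜)) t₀) := by
      rw [hfapp, hψapp, hWcoe]
      linear_combination (((ν⁻¹ : ℝ) : 𝕜) * ((M⁻¹ : ℝ) : 𝕜) * (starRingEnd 𝕜 θ)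
        * ((Z θ : ↥X) : C(K, 𝕜)) t₀) * hsconj
    have hq1 : RCLike.re ((starRingEnd 𝕜 θ) * θ) = 1 := by
      rw [RCLike.conj_mul, hθ]; norm_num
    have hq2 : |RCLike.re ((starRingEnd 𝕜 θ) * (((Z θ : ↥X) : C(K, 𝕜)) t₀ - θ))| ≤ 2 * δ := by
      refine (RCLike.abs_re_le_norm _).trans ?_
      rw [norm_mul, RCLike.norm_conj, hθ, one_mul]
      exact hZt₀ θ hθ
    have hQ : 1 - 2 * δ ≤ RCLike.re ((starRingEnd 𝕜 θ) * ((Z θ : ↥X) : C(K, 𝕜)) t₀) := by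
      have e : (starRingEnd 𝕜 θ) * ((Z θ : ↥X) : C(K, 𝕜)) t₀
          = (starRingEnd 𝕜 θ) * θ + (starRingEnd 𝕜 θ) * (((Z θ : ↥X) : C(K, 𝕜)) t₀ - θ) := by
        ring
      rw [e, map_add, hq1]
      have := abs_le.1 hq2
      linarith
    have hre : RCLike.re (f (W θ))
        = (ν⁻¹ * M⁻¹) * RCLike.re ((starRingEnd 𝕜 θ) * ((Z θ : ↥X) : C(K, 𝕜)) t₀) := by
      rw [happ, ← RCLike.ofReal_mul, RCLike.re_ofReal_mul]
    rw [hre]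
    set Q : ℝ := RCLike.re ((starRingEnd 𝕜 θ) * ((Z θ : ↥X) : C(K, 𝕜)) t₀) with hQdef
    clear_value Q
    have hQ0 : 0 ≤ Q := by linarith
    have h9 : (1 - ε) * M < 1 - 2 * δ := by rw [hMdef]; nlinarith [hδ0, hδε]
    have h10 : 1 - ε < M⁻¹ * (1 - 2 * δ) := by
      rw [inv_mul_eq_div, lt_div_iff₀ hM0]; exact h9
    have h11 : M⁻¹ * (1 - 2 * δ) ≤ M⁻¹ * Q := mul_le_mul_of_nonneg_left hQ (inv_nonneg.2 hM0.le)
    have h12 : M⁻¹ * Q ≤ ν⁻¹ * (M⁻¹ * Q) :=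
      le_mul_of_one_le_left (mul_nonneg (inv_nonneg.2 hM0.le) hQ0) hν1'
    calc 1 - ε < M⁻¹ * (1 - 2 * δ) := h10
      _ ≤ M⁻¹ * Q := h11
      _ ≤ ν⁻¹ * (M⁻¹ * Q) := h12
      _ = ν⁻¹ * M⁻¹ * Q := by ring
  have hWmem : ∀ θ : 𝕜, ‖θ‖ = 1 → W θ ∈ lushSlice f ε := fun θ hθ => ⟨hWnorm θ hθ, hfW θ hθ⟩
  -- the convex combination
  have husimp : ∀ θ : 𝕜, ‖θ‖ = 1 → (θ * (starRingEnd 𝕜) s) • W θ = ((M⁻¹ : ℝ) : 𝕜) • Z θ := by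
    intro θ hθ
    rw [hWeq θ, smul_smul]
    congr 1
    have hθconj : θ * (starRingEnd 𝕜) θ = 1 := by
      rw [RCLike.mul_conj, hθ]; norm_num
    have hsconj' : s * (starRingEnd 𝕜) s = 1 := by
      rw [RCLike.mul_conj, hsnorm]; norm_num
    calc θ * (starRingEnd 𝕜) s * ((starRingEnd 𝕜 θ) * s * ((M⁻¹ : ℝ) : 𝕜))
        = (θ * (starRingEnd 𝕜) θ) * (s * (starRingEnd 𝕜) s) * ((M⁻¹ : ℝ) : 𝕜) := by ring
      _ = ((M⁻¹ : ℝ) : 𝕜) := by rw [hθconj, hsconj']; ring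
  have hrs : ∀ (a : ℝ) (v : ↥X), a • v = ((a : ℝ) : 𝕜) • v := by
    intro a v
    rw [show ((a : ℝ) : 𝕜) = algebraMap ℝ 𝕜 a from (congrFun RCLike.algebraMap_eq_ofReal a).symm]
    exact (algebraMap_smul 𝕜 a v).symm
  refine ⟨f, hfnorm, ⟨hy.le, ?_⟩, ?_⟩
  · -- y belongs to the slice
    have hfy : RCLike.re (f y) = ν⁻¹ * ρ := by
      rw [hfapp, hψy, ← RCLike.ofReal_mul, RCLike.ofReal_re]
    rw [hfy]
    have : ρ ≤ ν⁻¹ * ρ := le_mul_of_one_le_left hρ0.le hν1'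
    linarith
  · -- distance estimate
    set S : Set ↥X := {z | ∃ (θ : 𝕜) (w : ↥X), ‖θ‖ = 1 ∧ w ∈ lushSlice f ε ∧ z = θ • w}
      with hSdef
    have hu₁ : ((M⁻¹ : ℝ) : 𝕜) • Z θ₁ ∈ S := by
      refine ⟨θ₁ * (starRingEnd 𝕜) s, W θ₁, ?_, hWmem θ₁ hθ₁, (husimp θ₁ hθ₁).symm⟩
      rw [norm_mul, hθ₁, RCLike.norm_conj, hsnorm, one_mul]
    have hu₂ : ((M⁻¹ : ℝ) : 𝕜) • Z θ₂ ∈ S := by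
      refine ⟨θ₂ * (starRingEnd 𝕜) s, W θ₂, ?_, hWmem θ₂ hθ₂, (husimp θ₂ hθ₂).symm⟩
      rw [norm_mul, hθ₂, RCLike.norm_conj, hsnorm, one_mul]
    clear_value S
    have hpmem : l • (((M⁻¹ : ℝ) : 𝕜) • Z θ₁) + (1 - l) • (((M⁻¹ : ℝ) : 𝕜) • Z θ₂)
        ∈ convexHull ℝ S :=
      (convex_convexHull ℝ S) (subset_convexHull ℝ S hu₁) (subset_convexHull ℝ S hu₂)
        hl0 (by linarith) (by ring)
    have hpx : l • (((M⁻¹ : ℝ) : 𝕜) • Z θ₁) + (1 - l) • (((M⁻¹ : ℝ) : 𝕜) • Z θ₂)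
        = ((M⁻¹ : ℝ) : 𝕜) • x := by
      rw [hrs l, hrs (1 - l), hZeq θ₁, hZeq θ₂]
      rw [smul_smul, smul_smul, smul_add, smul_add, smul_smul, smul_smul,
        add_add_add_comm, ← add_smul, ← add_smul]
      have hA : ((l : ℝ) : 𝕜) * ((M⁻¹ : ℝ) : 𝕜) + (((1 - l : ℝ)) : 𝕜) * ((M⁻¹ : ℝ) : 𝕜)
          = ((M⁻¹ : ℝ) : 𝕜) := by push_cast; ring
      have hB : ((l : ℝ) : 𝕜) * ((M⁻¹ : ℝ) : 𝕜) * (θ₁ - c)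
          + (((1 - l : ℝ)) : 𝕜) * ((M⁻¹ : ℝ) : 𝕜) * (θ₂ - c) = 0 := by
        have hc2 := hcombo
        push_cast at hc2 ⊢
        linear_combination (((M : ℝ) : 𝕜))⁻¹ * hc2
      rw [hA, hB, zero_smul, add_zero]
    have hdistx : dist x (((M⁻¹ : ℝ) : 𝕜) • x) < ε := by
      rw [dist_eq_norm]
      have e : x - ((M⁻¹ : ℝ) : 𝕜) • x = (((1 - M⁻¹ : ℝ)) : 𝕜) • x := by
        rw [show (((1 - M⁻¹ : ℝ)) : 𝕜) = 1 - ((M⁻¹ : ℝ) : 𝕜) by push_cast; ring]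
        module
      rw [e]
      have hn : ‖(((1 - M⁻¹ : ℝ)) : 𝕜) • x‖ = ‖(((1 - M⁻¹ : ℝ)) : 𝕜)‖ * ‖x‖ :=
        norm_smul (((1 - M⁻¹ : ℝ)) : 𝕜) x
      have hMinv : M * M⁻¹ = 1 := mul_inv_cancel₀ hM0.ne'
      have hMi1 : M⁻¹ ≤ 1 := by nlinarith
      have hMi0 : 0 < M⁻¹ := inv_pos.2 hM0
      rw [hn, RCLike.norm_ofReal, hx, mul_one, abs_of_nonneg (by linarith)]
      have h13 : 1 - M⁻¹ ≤ M - 1 := by nlinarith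
      have h14 : M - 1 ≤ 4 * δ := by rw [hMdef]; linarith
      linarith
    calc Metric.infDist x (convexHull ℝ S)
        ≤ dist x (((M⁻¹ : ℝ) : 𝕜) • x) := Metric.infDist_le_dist_of_mem (hpx ▸ hpmem)
      _ < ε := hdistx
end

section
/- Let K be a compact Hausdorff space and let f₁, …, fₙ be continuous linear functionals on C(K). If fᵢ(χ_{t}) = 0 for every isolated point t of K and every i = 1, …, n (where χ_{t} ∈ C(K) is the characteristic function of the singleton {t}, which is continuous since t is isolated), then the subspace Y = ∩_{i=1}^{n} ker fᵢ is a C-rich subspace of C(K). -/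
open Filter Topology Metric

section Aux

variable {K 𝕜 : Type*} [TopologicalSpace K] [CompactSpace K] [T2Space K] [RCLike 𝕜]

lemma mySplit {U W : Set K} (hU : ∀ t ∈ U, ¬ IsOpen ({t} : Set K))
    (hW : IsOpen W) (hWne : W.Nonempty) (hWU : W ⊆ U) :
    ∃ W₁ W₂ : Set K, IsOpen W₁ ∧ IsOpen W₂ ∧ W₁.Nonempty ∧ W₂.Nonempty ∧
      W₁ ⊆ W ∧ W₂ ⊆ W ∧ Disjoint W₁ W₂ := by
  obtain ⟨x, hx⟩ := hWne
  have hxy : ∃ y ∈ W, y ≠ x := by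
    by_contra hcon
    push_neg at hcon
    have hWx : W = {x} := Set.eq_singleton_iff_unique_mem.2 ⟨hx, hcon⟩
    exact hU x (hWU hx) (hWx ▸ hW)
  obtain ⟨y, hyW, hyx⟩ := hxy
  obtain ⟨A, B, hA, hB, hxA, hyB, hAB⟩ := t2_separation hyx.symm
  exact ⟨W ∩ A, W ∩ B, hW.inter hA, hW.inter hB, ⟨x, hx, hxA⟩, ⟨y, hyW, hyB⟩,
    Set.inter_subset_left, Set.inter_subset_left,
    hAB.mono Set.inter_subset_right Set.inter_subset_right⟩

lemma myDisjointOpens {U : Set K} (hU : ∀ t ∈ U, ¬ IsOpen ({t} : Set K)) :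
    ∀ N : ℕ, ∀ W : Set K, IsOpen W → W.Nonempty → W ⊆ U →
    ∃ V : Fin N → Set K, (∀ j, IsOpen (V j)) ∧ (∀ j, (V j).Nonempty) ∧
      (∀ j, V j ⊆ W) ∧ ∀ j k, j ≠ k → Disjoint (V j) (V k) := by
  intro N
  induction N with
  | zero =>
    intro W _ _ _
    exact ⟨fun j => j.elim0, fun j => j.elim0, fun j => j.elim0, fun j => j.elim0,
      fun j => j.elim0⟩
  | succ N ih =>
    intro W hWo hWne hWU
    obtain ⟨W₁, W₂, h1o, h2o, h1ne, h2ne, h1W, h2W, hd⟩ := mySplit hU hWo hWne hWU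
    obtain ⟨V', hVo, hVne, hVW, hVd⟩ := ih W₂ h2o h2ne (h2W.trans hWU)
    classical
    refine ⟨fun j => if h : j = 0 then W₁ else V' (j.pred h), ?_, ?_, ?_, ?_⟩
    · intro j; by_cases h : j = 0 <;> simp [h, h1o, hVo]
    · intro j; by_cases h : j = 0 <;> simp [h, h1ne, hVne]
    · intro j; by_cases h : j = 0 <;> simp only [h, dif_pos, dif_neg, not_false_iff]
      · exact h1W
      · exact (hVW _).trans h2W
    · intro j k hjk
      by_cases hj : j = 0 <;> by_cases hk : k = 0
      · exact absurd (hj.trans hk.symm) hjk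
      · simpa [hj, hk] using hd.mono_right ((hVW _).trans (subset_refl _))
      · simpa [hj, hk] using (hd.mono_right (hVW _)).symm
      · have : j.pred hj ≠ k.pred hk := by
          intro h; exact hjk (by rwa [Fin.pred_inj] at h)
        simpa [hj, hk] using hVd _ _ this

lemma myBump {V : Set K} (hV : IsOpen V) {x : K} (hx : x ∈ V) :
    ∃ h : C(K, 𝕜), ‖h‖ = 1 ∧ (∀ t, 0 ≤ RCLike.re (h t) ∧ RCLike.im (h t) = 0) ∧
      Function.support ⇑h ⊆ V := by
  obtain ⟨g, hg0, hg1, hg01⟩ := exists_continuous_zero_one_of_isClosed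
    hV.isClosed_compl (isClosed_singleton (x := x))
    (Set.disjoint_singleton_right.2 (by simp [hx]))
  refine ⟨⟨fun t => ((g t : ℝ) : 𝕜), RCLike.continuous_ofReal.comp g.continuous⟩, ?_, ?_, ?_⟩
  · apply le_antisymm
    · rw [ContinuousMap.norm_le _ zero_le_one]
      intro t
      simp only [ContinuousMap.coe_mk, RCLike.norm_ofReal]
      rw [abs_le]
      exact ⟨by linarith [(hg01 t).1], (hg01 t).2⟩
    · have h1 : ((⟨fun t => ((g t : ℝ) : 𝕜), RCLike.continuous_ofReal.comp g.continuous⟩ :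
          C(K, 𝕜)) x) = 1 := by
        simp [hg1 (Set.mem_singleton x)]
      calc (1 : ℝ) = ‖((⟨fun t => ((g t : ℝ) : 𝕜), RCLike.continuous_ofReal.comp g.continuous⟩ :
          C(K, 𝕜)) x)‖ := by rw [h1]; simp
        _ ≤ _ := ContinuousMap.norm_coe_le_norm _ x
  · intro t
    simp only [ContinuousMap.coe_mk, RCLike.ofReal_re, RCLike.ofReal_im]
    exact ⟨(hg01 t).1, trivial⟩
  · intro t ht
    simp only [Function.mem_support, ContinuousMap.coe_mk, ne_eq, RCLike.ofReal_eq_zero] at ht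
    by_contra hc
    exact ht (hg0 hc)

lemma myIndicator {t : K} (ht : IsOpen ({t} : Set K)) :
    ∃ h : C(K, 𝕜), h t = 1 ∧ (∀ s, s ≠ t → h s = 0) ∧ ‖h‖ = 1 ∧
      (∀ s, 0 ≤ RCLike.re (h s) ∧ RCLike.im (h s) = 0) ∧
      Function.support ⇑h ⊆ ({t} : Set K) := by
  classical
  have hfr : frontier {s : K | s = t} = ∅ := by
    have : IsClopen ({t} : Set K) := ⟨isClosed_singleton, ht⟩
    simpa [Set.setOf_eq_eq_singleton] using this.frontier_eq
  have hcont : Continuous fun s : K => if s = t then (1 : 𝕜) else 0 := by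
    apply Continuous.if
    · intro a ha; rw [hfr] at ha; exact absurd ha (Set.notMem_empty a)
    · exact continuous_const
    · exact continuous_const
  refine ⟨⟨fun s => if s = t then (1 : 𝕜) else 0, hcont⟩, by simp, ?_, ?_, ?_, ?_⟩
  · intro s hs; simp [hs]
  · apply le_antisymm
    · rw [ContinuousMap.norm_le _ zero_le_one]
      intro s
      by_cases hs : s = t <;> simp [hs]
    · calc (1 : ℝ) = ‖((⟨fun s => if s = t then (1 : 𝕜) else 0, hcont⟩ : C(K, 𝕜)) t)‖ := by simp
        _ ≤ _ := ContinuousMap.norm_coe_le_norm _ t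
  · intro s; by_cases hs : s = t <;> simp [hs]
  · intro s hs
    simp only [Function.mem_support, ContinuousMap.coe_mk, ne_eq, ite_eq_right_iff,
      one_ne_zero] at hs
    simp only [Set.mem_singleton_iff]
    by_contra hc
    exact hs fun h => absurd h hc

lemma myInfDistKer {E : Type*} [NormedAddCommGroup E] [NormedSpace 𝕜 E] {n : ℕ}
    (F : E →ₗ[𝕜] (Fin n → 𝕜)) :
    ∃ C : ℝ, 0 ≤ C ∧ ∀ g : E,
      infDist g (LinearMap.ker F : Set E) ≤ C * ‖F g‖ := by
  let e := F.quotKerEquivRange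
  let L : LinearMap.range F →ₗ[𝕜] (E ⧸ LinearMap.ker F) := e.symm.toLinearMap
  let L' := LinearMap.toContinuousLinearMap L
  refine ⟨‖L'‖, ContinuousLinearMap.opNorm_nonneg _, fun g => ?_⟩
  have h1 : infDist g (LinearMap.ker F : Set E)
      = ‖(Submodule.Quotient.mk g : E ⧸ LinearMap.ker F)‖ :=
    (QuotientAddGroup.norm_mk (S := (LinearMap.ker F).toAddSubgroup) g).symm
  have h2 : (Submodule.Quotient.mk g : E ⧸ LinearMap.ker F)
      = L' (e (Submodule.Quotient.mk g)) := by
    show _ = e.symm (e _)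
    rw [e.symm_apply_apply]
  have h3 : ‖e (Submodule.Quotient.mk g : E ⧸ LinearMap.ker F)‖ = ‖F g‖ := by
    have := F.quotKerEquivRange_apply_mk g
    calc ‖e (Submodule.Quotient.mk g : E ⧸ LinearMap.ker F)‖
        = ‖((e (Submodule.Quotient.mk g) : LinearMap.range F) : Fin n → 𝕜)‖ := rfl
      _ = ‖F g‖ := by rw [this]
  rw [h1, h2]
  calc ‖L' (e (Submodule.Quotient.mk g))‖ ≤ ‖L'‖ * ‖e (Submodule.Quotient.mk g)‖ :=
        L'.le_opNorm _
    _ = ‖L'‖ * ‖F g‖ := by rw [h3]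

lemma myKey {n N : ℕ} (f : Fin n → (C(K, 𝕜) →L[𝕜] 𝕜))
    (V : Fin N → Set K) (hVd : ∀ j k, j ≠ k → Disjoint (V j) (V k))
    (h : Fin N → C(K, 𝕜)) (hn : ∀ j, ‖h j‖ = 1)
    (hsupp : ∀ j, Function.support ⇑(h j) ⊆ V j) (i : Fin n) :
    ∑ j, ‖f i (h j)‖ ≤ ‖f i‖ := by
  classical
  set c : Fin N → 𝕜 := fun j =>
    if f i (h j) = 0 then 0 else (starRingEnd 𝕜) (f i (h j)) / ((‖f i (h j)‖ : ℝ) : 𝕜) with hc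
  have hc_norm : ∀ j, ‖c j‖ ≤ 1 := by
    intro j
    by_cases hz : f i (h j) = 0
    · simp [hc, hz]
    · simp only [hc, hz, if_false, norm_div, RCLike.norm_conj, RCLike.norm_ofReal,
        abs_norm]
      rw [div_self (norm_ne_zero_iff.2 hz)]
  have hc_mul : ∀ j, c j * f i (h j) = ((‖f i (h j)‖ : ℝ) : 𝕜) := by
    intro j
    by_cases hz : f i (h j) = 0
    · simp [hc, hz]
    · have hnz : ((‖f i (h j)‖ : ℝ) : 𝕜) ≠ 0 := by
        simpa using norm_ne_zero_iff.2 hz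
      rw [hc]
      simp only [hz, if_false]
      rw [div_mul_eq_mul_div, RCLike.conj_mul, sq, mul_div_assoc,
        div_self hnz, mul_one]
  set g : C(K, 𝕜) := ∑ j, c j • h j with hg
  have hg_norm : ‖g‖ ≤ 1 := by
    rw [ContinuousMap.norm_le _ zero_le_one]
    intro t
    have hgt : g t = ∑ j, c j * (h j) t := by
      rw [hg]; simp
    by_cases hex : ∃ j0, (h j0) t ≠ 0
    · obtain ⟨j0, hj0⟩ := hex
      have ht0 : t ∈ V j0 := hsupp j0 hj0
      have : g t = c j0 * (h j0) t := by
        rw [hgt]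
        refine Finset.sum_eq_single j0 (fun j _ hj => ?_) (by simp)
        have htj : t ∉ V j := fun htV => (hVd j j0 hj).le_bot ⟨htV, ht0⟩
        have : (h j) t = 0 := by
          by_contra hcon
          exact htj (hsupp j hcon)
        rw [this, mul_zero]
      rw [this, norm_mul]
      have h1 : ‖(h j0) t‖ ≤ 1 := by
        calc ‖(h j0) t‖ ≤ ‖h j0‖ := ContinuousMap.norm_coe_le_norm _ t
          _ = 1 := hn j0
      calc ‖c j0‖ * ‖(h j0) t‖ ≤ 1 * 1 :=
        mul_le_mul (hc_norm j0) h1 (norm_nonneg _) zero_le_one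
        _ = 1 := one_mul 1
    · push_neg at hex
      have : g t = 0 := by
        rw [hgt]
        exact Finset.sum_eq_zero fun j _ => by rw [hex j, mul_zero]
      simp [this]
  have hfg : f i g = ((∑ j, ‖f i (h j)‖ : ℝ) : 𝕜) := by
    rw [hg, map_sum]
    push_cast
    refine Finset.sum_congr rfl fun j _ => ?_
    rw [map_smul, smul_eq_mul, hc_mul j]
  calc ∑ j, ‖f i (h j)‖ = ‖f i g‖ := by
        rw [hfg, RCLike.norm_ofReal, abs_of_nonneg (Finset.sum_nonneg fun j _ => norm_nonneg _)]
    _ ≤ ‖f i‖ * ‖g‖ := (f i).le_opNorm g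
    _ ≤ ‖f i‖ * 1 := mul_le_mul_of_nonneg_left hg_norm (norm_nonneg _)
    _ = ‖f i‖ := mul_one _

end Aux

/-- If each functional `f i` annihilates the characteristic function of every isolated point
of `K`, then the intersection of their kernels is a C-rich subspace of `C(K)`. -/
theorem isCRich_iInf_ker {K 𝕜 : Type*} [TopologicalSpace K] [CompactSpace K] [T2Space K]
    [RCLike 𝕜] {n : ℕ} (f : Fin n → (C(K, 𝕜) →L[𝕜] 𝕜))
    (hf : ∀ i : Fin n, ∀ t : K, IsOpen ({t} : Set K) →
      ∀ g : C(K, 𝕜), (g t = 1 ∧ ∀ s : K, s ≠ t → g s = 0) → f i g = 0) :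
    IsCRich (⨅ i : Fin n, LinearMap.ker (f i : C(K, 𝕜) →ₗ[𝕜] 𝕜)) := by
  intro U hUo hUne ε hε
  by_cases hiso : ∃ t ∈ U, IsOpen ({t} : Set K)
  · obtain ⟨t, htU, ht⟩ := hiso
    obtain ⟨h, ht1, ht0, hnorm, hreim, hsupp⟩ := myIndicator (𝕜 := 𝕜) ht
    refine ⟨h, hnorm, hreim, hsupp.trans (Set.singleton_subset_iff.2 htU), ?_⟩
    have hmem : h ∈ (⨅ i, LinearMap.ker (f i : C(K, 𝕜) →ₗ[𝕜] 𝕜) : Submodule 𝕜 C(K, 𝕜)) := by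
      rw [Submodule.mem_iInf]
      intro i
      exact LinearMap.mem_ker.2 (hf i t ht h ⟨ht1, ht0⟩)
    rw [Metric.infDist_zero_of_mem hmem]
    exact hε
  · push_neg at hiso
    set F : C(K, 𝕜) →L[𝕜] (Fin n → 𝕜) := ContinuousLinearMap.pi f with hF
    obtain ⟨C, hC0, hC⟩ := myInfDistKer (𝕜 := 𝕜) (F : C(K, 𝕜) →ₗ[𝕜] (Fin n → 𝕜))
    have hkerset : (LinearMap.ker (F : C(K, 𝕜) →ₗ[𝕜] (Fin n → 𝕜)) : Set C(K, 𝕜))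
        = ((⨅ i, LinearMap.ker (f i : C(K, 𝕜) →ₗ[𝕜] 𝕜) : Submodule 𝕜 C(K, 𝕜)) : Set C(K, 𝕜)) := by
      ext g
      simp only [SetLike.mem_coe, LinearMap.mem_ker, Submodule.mem_iInf,
        ContinuousLinearMap.coe_coe, hF]
      constructor
      · intro hg i
        have := congrFun hg i
        simpa [ContinuousLinearMap.pi_apply] using this
      · intro hg
        funext i
        simpa [ContinuousLinearMap.pi_apply] using hg i
    set S : ℝ := ∑ i, ‖f i‖ with hS
    have hS0 : 0 ≤ S := Finset.sum_nonneg fun i _ => norm_nonneg _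
    set N : ℕ := ⌈C * S / ε⌉₊ + 1 with hN
    have hNpos : (0 : ℝ) < N := by
      rw [hN]; push_cast; positivity
    obtain ⟨V, hVo, hVne, hVU, hVd⟩ := myDisjointOpens hiso N U hUo hUne subset_rfl
    have hbump : ∀ j : Fin N, ∃ h : C(K, 𝕜), ‖h‖ = 1 ∧
        (∀ t, 0 ≤ RCLike.re (h t) ∧ RCLike.im (h t) = 0) ∧
        Function.support ⇑h ⊆ V j :=
      fun j => myBump (hVo j) (hVne j).choose_spec
    choose h hn hre hsupp using hbump
    have key : ∀ i, ∑ j, ‖f i (h j)‖ ≤ ‖f i‖ := myKey f V hVd h hn hsupp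
    have total : ∑ j : Fin N, ∑ i, ‖f i (h j)‖ ≤ S := by
      rw [Finset.sum_comm]
      exact Finset.sum_le_sum fun i _ => key i
    have hpig : ∃ j : Fin N, ∑ i, ‖f i (h j)‖ ≤ S / N := by
      by_contra hcon
      push_neg at hcon
      haveI : NeZero N := ⟨by rw [hN]; exact Nat.succ_ne_zero _⟩
      have hlt : S < ∑ j : Fin N, ∑ i, ‖f i (h j)‖ := by
        calc S = ∑ _j : Fin N, S / N := by
              rw [Finset.sum_const, Finset.card_univ, Fintype.card_fin, nsmul_eq_mul]
              field_simp
          _ < _ := Finset.sum_lt_sum_of_nonempty Finset.univ_nonempty fun j _ => hcon j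
      linarith
    obtain ⟨j0, hj0⟩ := hpig
    refine ⟨h j0, hn j0, hre j0, (hsupp j0).trans (hVU j0), ?_⟩
    rw [← hkerset]
    have hFle : ‖F (h j0)‖ ≤ ∑ i, ‖f i (h j0)‖ := by
      refine (pi_norm_le_iff_of_nonneg (x := F (h j0))
        (Finset.sum_nonneg fun i _ => norm_nonneg _)).2 fun i => ?_
      have hFi : ‖F (h j0) i‖ = ‖f i (h j0)‖ := by rw [hF, ContinuousLinearMap.pi_apply]
      rw [hFi]
      exact Finset.single_le_sum (f := fun i => ‖f i (h j0)‖) (fun i _ => norm_nonneg _)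
        (Finset.mem_univ i)
    have hceil : C * S / ε < (N : ℝ) := by
      rw [hN]
      push_cast
      exact lt_of_le_of_lt (Nat.le_ceil _) (by linarith)
    have hcs : C * S < ε * N := by
      have := (div_lt_iff₀ hε).1 hceil
      linarith
    calc infDist (h j0) (LinearMap.ker (F : C(K, 𝕜) →ₗ[𝕜] (Fin n → 𝕜)) : Set C(K, 𝕜))
        ≤ C * ‖F (h j0)‖ := hC (h j0)
      _ ≤ C * (S / N) := mul_le_mul_of_nonneg_left (hFle.trans hj0) hC0
      _ < ε := by
          rw [← mul_div_assoc, div_lt_iff₀ hNpos]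
          linarith
end

section
/- Let K be a compact Hausdorff space and let f₁, …, fₙ be continuous linear functionals on C(K). If the subspace Y = ∩_{i=1}^{n} ker fᵢ is a C-rich subspace of C(K), then fᵢ(χ_{t}) = 0 for every isolated point t of K and every i = 1, …, n (where χ_{t} ∈ C(K) is the characteristic function of the singleton {t}). -/
open Filter Topology Metric

/-- If the intersection of the kernels of the functionals `f i` is a C-rich subspace of
`C(K)`, then each `f i` annihilates the characteristic function of every isolated point
of `K`. -/
theorem eq_zero_of_isCRich_iInf_ker {K 𝕜 : Type*} [TopologicalSpace K] [CompactSpace K]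
    [T2Space K] [RCLike 𝕜] {n : ℕ} (f : Fin n → (C(K, 𝕜) →L[𝕜] 𝕜))
    (hrich : IsCRich (⨅ i : Fin n, LinearMap.ker (f i : C(K, 𝕜) →ₗ[𝕜] 𝕜))) :
    ∀ i : Fin n, ∀ t : K, IsOpen ({t} : Set K) →
      ∀ g : C(K, 𝕜), (g t = 1 ∧ ∀ s : K, s ≠ t → g s = 0) → f i g = 0 := by
  intro i t ht g ⟨hg1, hg0⟩
  set Y := (⨅ i : Fin n, LinearMap.ker (f i : C(K, 𝕜) →ₗ[𝕜] 𝕜)) with hY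
  have hbound : ∀ ε : ℝ, 0 < ε → ‖f i g‖ ≤ ‖f i‖ * ε := by
    intro ε hε
    obtain ⟨h, hn, hr, hs, hd⟩ := hrich {t} ht ⟨t, rfl⟩ ε hε
    have hzero : ∀ s : K, s ≠ t → h s = 0 := by
      intro s hst
      by_contra hc
      exact hst (hs hc)
    have hht : ‖h t‖ = 1 := by
      have hle : ‖h t‖ ≤ ‖h‖ := h.norm_coe_le_norm t
      have hge : ‖h‖ ≤ ‖h t‖ := by
        apply (ContinuousMap.norm_le h (norm_nonneg _)).mpr
        intro x
        by_cases hx : x = t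
        · subst hx; exact le_refl _
        · rw [hzero x hx]; simp
      rw [← hn]; exact le_antisymm hle hge
    have hre : h t = ((RCLike.re (h t) : ℝ) : 𝕜) := by
      conv_lhs => rw [← RCLike.re_add_im (h t)]
      rw [(hr t).2]; simp
    have hht1 : h t = 1 := by
      rw [hre] at hht ⊢
      rw [RCLike.norm_ofReal] at hht
      have : RCLike.re (h t) = 1 := by
        rcases abs_eq (by norm_num : (0:ℝ) ≤ 1) |>.mp hht with h1 | h1
        · exact h1
        · linarith [(hr t).1]
      rw [this]; norm_num
    have hgh : g = h := by
      ext x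
      by_cases hx : x = t
      · subst hx; rw [hg1, hht1]
      · rw [hg0 x hx, hzero x hx]
    have hYne : ((Y : Set C(K, 𝕜))).Nonempty := ⟨0, Y.zero_mem⟩
    obtain ⟨y, hyY, hdy⟩ := (Metric.infDist_lt_iff hYne).mp hd
    have hfy : f i y = 0 := by
      have := (Submodule.mem_iInf _).mp hyY i
      exact this
    have : f i g = f i (h - y) := by
      rw [map_sub, hfy, sub_zero, hgh]
    rw [this]
    calc ‖f i (h - y)‖ ≤ ‖f i‖ * ‖h - y‖ := (f i).le_opNorm _
      _ ≤ ‖f i‖ * ε := by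
          apply mul_le_mul_of_nonneg_left _ (norm_nonneg _)
          rw [← dist_eq_norm]
          exact hdy.le
  by_contra hne
  have hpos : 0 < ‖f i g‖ := norm_pos_iff.mpr hne
  have hεpos : 0 < ‖f i g‖ / (‖f i‖ + 1) := by positivity
  have hb := hbound _ hεpos
  have hlt : ‖f i‖ * (‖f i g‖ / (‖f i‖ + 1)) < ‖f i g‖ := by
    rw [mul_div_assoc'] at *
    rw [div_lt_iff₀ (by positivity)]
    nlinarith [norm_nonneg (f i)]
  linarith
end

section
/- Let K be a compact Hausdorff space with no isolated points (a perfect compact space) and let f₁, …, fₙ be continuous linear functionals on C(K). Then the finite-codimensional subspace Y = ∩_{i=1}^{n} ker fᵢ is a C-rich subspace of C(K). -/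
open Filter Topology Metric

section Aux

variable {K 𝕜 : Type*} [TopologicalSpace K] [CompactSpace K] [T2Space K] [RCLike 𝕜]

/-- In a perfect space, any nonempty open set contains two disjoint nonempty open subsets. -/
lemma CRichAux.split_open (hK : ∀ t : K, ¬ IsOpen ({t} : Set K)) {U : Set K} (hU : IsOpen U)
    (hne : U.Nonempty) : ∃ A B : Set K, IsOpen A ∧ IsOpen B ∧ A.Nonempty ∧ B.Nonempty ∧
      A ⊆ U ∧ B ⊆ U ∧ Disjoint A B := by
  obtain ⟨t, ht⟩ := hne
  have hst : ∃ s ∈ U, s ≠ t := by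
    by_contra h
    push_neg at h
    exact hK t ((Set.eq_singleton_iff_unique_mem.2 ⟨ht, h⟩) ▸ hU)
  obtain ⟨s, hs, hsne⟩ := hst
  obtain ⟨W, V, hWopen, hVopen, hsW, htV, hdisj⟩ := t2_separation hsne
  exact ⟨U ∩ V, U ∩ W, hU.inter hVopen, hU.inter hWopen, ⟨t, ht, htV⟩, ⟨s, hs, hsW⟩,
    Set.inter_subset_left, Set.inter_subset_left,
    hdisj.symm.mono Set.inter_subset_right Set.inter_subset_right⟩

/-- In a perfect space, any nonempty open set contains `N` pairwise disjoint nonempty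
open subsets. -/
lemma CRichAux.exists_disjoint_opens (hK : ∀ t : K, ¬ IsOpen ({t} : Set K)) :
    ∀ (N : ℕ) (U : Set K), IsOpen U → U.Nonempty →
      ∃ V : Fin N → Set K, (∀ k, IsOpen (V k) ∧ (V k).Nonempty ∧ V k ⊆ U) ∧
        Pairwise (Function.onFun Disjoint V) := by
  intro N
  induction N with
  | zero => exact fun U _ _ => ⟨fun k => k.elim0, fun k => k.elim0, fun k => k.elim0⟩
  | succ N ih =>
    intro U hU hne
    obtain ⟨A, B, hA, hB, hAne, hBne, hAU, hBU, hAB⟩ := CRichAux.split_open hK hU hne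
    obtain ⟨V, hV, hVdisj⟩ := ih A hA hAne
    refine ⟨Fin.cons B V, ?_, ?_⟩
    · refine Fin.cases ?_ ?_
      · exact ⟨hB, hBne, hBU⟩
      · intro j; exact ⟨(hV j).1, (hV j).2.1, (hV j).2.2.trans hAU⟩
    · intro i j hij
      refine Fin.cases (motive := fun i => i ≠ j →
          Function.onFun Disjoint (Fin.cons B V) i j) ?_ ?_ i hij
      · refine Fin.cases (motive := fun j => (0 : Fin (N+1)) ≠ j →
            Function.onFun Disjoint (Fin.cons B V) 0 j) ?_ ?_ j
        · intro hcon; exact absurd rfl hcon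
        · intro j' _
          simpa [Function.onFun] using hAB.symm.mono_right (hV j').2.2
      · intro i'
        refine Fin.cases (motive := fun j => (i'.succ : Fin (N+1)) ≠ j →
            Function.onFun Disjoint (Fin.cons B V) i'.succ j) ?_ ?_ j
        · intro _
          simpa [Function.onFun] using hAB.mono_left (hV i').2.2
        · intro j' hne'
          have : i' ≠ j' := fun h => hne' (by rw [h])
          simpa [Function.onFun] using hVdisj this

/-- A nonnegative norm-one bump supported inside a given nonempty open set. -/
lemma CRichAux.exists_bump {U : Set K} (hU : IsOpen U) (hne : U.Nonempty) :
    ∃ h : C(K, 𝕜), ‖h‖ = 1 ∧ (∀ t, 0 ≤ RCLike.re (h t) ∧ RCLike.im (h t) = 0) ∧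
      Function.support ⇑h ⊆ U := by
  obtain ⟨t0, ht0⟩ := hne
  obtain ⟨g, hsupp, heq, hmem⟩ := exists_tsupport_one_of_isOpen_isClosed hU
    (IsClosed.isCompact isClosed_closure) isClosed_singleton
    (Set.singleton_subset_iff.2 ht0)
  set h : C(K, 𝕜) := ⟨fun t => ((g t : ℝ) : 𝕜), RCLike.continuous_ofReal.comp g.continuous⟩
    with hhdef
  refine ⟨h, ?_, ?_, ?_⟩
  · apply le_antisymm
    · refine (ContinuousMap.norm_le _ zero_le_one).2 fun t => ?_
      simp only [hhdef, ContinuousMap.coe_mk]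
      rw [RCLike.norm_ofReal, abs_of_nonneg (hmem t).1]
      exact (hmem t).2
    · have h1 : ((1 : ℝ) : 𝕜) = h t0 := by
        simp only [hhdef, ContinuousMap.coe_mk]
        rw [heq rfl]; norm_num
      calc (1 : ℝ) = ‖((1 : ℝ) : 𝕜)‖ := by simp
        _ = ‖h t0‖ := by rw [h1]
        _ ≤ _ := ContinuousMap.norm_coe_le_norm _ t0
  · intro t
    simp [hhdef, RCLike.ofReal_re, RCLike.ofReal_im, (hmem t).1]
  · intro t ht
    simp only [hhdef, ContinuousMap.coe_mk, Function.mem_support, ne_eq,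
      RCLike.ofReal_eq_zero] at ht
    exact hsupp (subset_tsupport g ht)

/-- Norm bound for a combination of disjointly supported functions. -/
lemma CRichAux.norm_sum_le {N : ℕ} {V : Fin N → Set K}
    (hdisj : Pairwise (Function.onFun Disjoint V)) {h : Fin N → C(K, 𝕜)}
    (hnorm : ∀ k, ‖h k‖ ≤ 1) (hsupp : ∀ k, Function.support ⇑(h k) ⊆ V k)
    {θ : Fin N → 𝕜} (hθ : ∀ k, ‖θ k‖ ≤ 1) : ‖∑ k, θ k • h k‖ ≤ 1 := by
  refine (ContinuousMap.norm_le _ zero_le_one).2 fun t => ?_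
  have hval : (∑ k, θ k • h k) t = ∑ k, θ k • (h k t) := by
    simp [ContinuousMap.coe_sum, Finset.sum_apply]
  rw [hval]
  by_cases hex : ∃ k0, h k0 t ≠ 0
  · obtain ⟨k0, hk0⟩ := hex
    have hsum : ∑ k, θ k • (h k t) = θ k0 • (h k0 t) := by
      refine Finset.sum_eq_single k0 (fun k _ hk => ?_) (by simp)
      have hz : h k t = 0 := by
        by_contra hne
        exact Set.disjoint_left.1 (hdisj hk) (hsupp k hne) (hsupp k0 hk0)
      rw [hz, smul_zero]
    rw [hsum, norm_smul]
    calc ‖θ k0‖ * ‖h k0 t‖ ≤ 1 * ‖h k0‖ :=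
          mul_le_mul (hθ k0) (ContinuousMap.norm_coe_le_norm _ t) (norm_nonneg _)
            zero_le_one
      _ ≤ 1 := by rw [one_mul]; exact hnorm k0
  · push_neg at hex
    simp [hex]

/-- Disjointly supported norm-one bumps: the sum of `|f (h k)|` is at most `‖f‖`. -/
lemma CRichAux.sum_norm_apply_le {N : ℕ} {V : Fin N → Set K}
    (hdisj : Pairwise (Function.onFun Disjoint V)) {h : Fin N → C(K, 𝕜)}
    (hnorm : ∀ k, ‖h k‖ ≤ 1) (hsupp : ∀ k, Function.support ⇑(h k) ⊆ V k)
    (f : C(K, 𝕜) →L[𝕜] 𝕜) : ∑ k, ‖f (h k)‖ ≤ ‖f‖ := by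
  set θ : Fin N → 𝕜 := fun k => if f (h k) = 0 then 1 else (‖f (h k)‖ : 𝕜) / f (h k) with hθdef
  have hθ : ∀ k, ‖θ k‖ ≤ 1 := by
    intro k
    rw [hθdef]
    by_cases hz : f (h k) = 0
    · simp [hz]
    · simp only [hz, if_false]
      rw [norm_div, RCLike.norm_ofReal, abs_of_nonneg (norm_nonneg _)]
      rw [div_self (by simpa using hz)]
  have hmul : ∀ k, θ k * f (h k) = ((‖f (h k)‖ : ℝ) : 𝕜) := by
    intro k
    rw [hθdef]
    by_cases hz : f (h k) = 0
    · simp [hz]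
    · simp only [hz, if_false]
      rw [div_mul_cancel₀ _ hz]
  have hfg : f (∑ k, θ k • h k) = ((∑ k, ‖f (h k)‖ : ℝ) : 𝕜) := by
    rw [map_sum]
    push_cast
    refine Finset.sum_congr rfl fun k _ => ?_
    rw [map_smul, smul_eq_mul, hmul k]
  calc ∑ k, ‖f (h k)‖ = ‖((∑ k, ‖f (h k)‖ : ℝ) : 𝕜)‖ := by
        rw [RCLike.norm_ofReal, abs_of_nonneg (Finset.sum_nonneg fun k _ => norm_nonneg _)]
    _ = ‖f (∑ k, θ k • h k)‖ := by rw [hfg]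
    _ ≤ ‖f‖ * ‖∑ k, θ k • h k‖ := f.le_opNorm _
    _ ≤ ‖f‖ * 1 := by
        refine mul_le_mul_of_nonneg_left ?_ (norm_nonneg _)
        exact CRichAux.norm_sum_le hdisj hnorm hsupp hθ
    _ = ‖f‖ := mul_one _

end Aux

set_option maxHeartbeats 1000000

/-- If `K` is a perfect compact Hausdorff space (no isolated points), then every finite
intersection of kernels of continuous linear functionals on `C(K)` is a C-rich subspace. -/
theorem isCRich_iInf_ker_of_perfect {K 𝕜 : Type*} [TopologicalSpace K] [CompactSpace K]
    [T2Space K] [RCLike 𝕜] (hK : ∀ t : K, ¬ IsOpen ({t} : Set K))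
    {n : ℕ} (f : Fin n → (C(K, 𝕜) →L[𝕜] 𝕜)) :
    IsCRich (⨅ i : Fin n, LinearMap.ker (f i).toLinearMap) := by
  intro U hUopen hUne ε hε
  set Φ : C(K, 𝕜) →ₗ[𝕜] (Fin n → 𝕜) := LinearMap.pi (fun i => (f i : C(K, 𝕜) →ₗ[𝕜] 𝕜))
    with hΦdef
  have hker : ∀ g : C(K, 𝕜), Φ g = 0 ↔ g ∈ (⨅ i, LinearMap.ker (f i).toLinearMap) := by
    intro g
    simp [hΦdef, Submodule.mem_iInf, funext_iff, LinearMap.pi_apply]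
  obtain ⟨S, hS⟩ := Φ.rangeRestrict.exists_rightInverse_of_surjective
    (LinearMap.range_eq_top.2 Φ.surjective_rangeRestrict)
  set Sc : LinearMap.range Φ →L[𝕜] C(K, 𝕜) := LinearMap.toContinuousLinearMap S with hScdef
  set ε' : ℝ := ε / (‖Sc‖ + 1) with hε'def
  have hε' : 0 < ε' := div_pos hε (by positivity)
  set M : ℝ := ∑ i, ‖f i‖ with hMdef
  set N : ℕ := ⌈M / ε'⌉₊ + 1 with hNdef
  obtain ⟨V, hV, hVdisj⟩ := CRichAux.exists_disjoint_opens hK N U hUopen hUne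
  choose h hh1 hh2 hh3 using fun k : Fin N => CRichAux.exists_bump (𝕜 := 𝕜) (hV k).1 (hV k).2.1
  have hsupp : ∀ k, Function.support ⇑(h k) ⊆ V k := hh3
  have hnorm : ∀ k, ‖h k‖ ≤ 1 := fun k => le_of_eq (hh1 k)
  have key : ∃ k, ∑ i, ‖f i (h k)‖ < ε' := by
    by_contra hcon
    push_neg at hcon
    have h1 : (N : ℝ) * ε' ≤ ∑ k, ∑ i, ‖f i (h k)‖ := by
      calc (N : ℝ) * ε' = ∑ _k : Fin N, ε' := by
            rw [Finset.sum_const, Finset.card_univ, Fintype.card_fin, nsmul_eq_mul]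
        _ ≤ _ := Finset.sum_le_sum fun k _ => hcon k
    have h2 : ∑ k, ∑ i, ‖f i (h k)‖ ≤ M := by
      rw [Finset.sum_comm, hMdef]
      exact Finset.sum_le_sum fun i _ =>
        CRichAux.sum_norm_apply_le hVdisj hnorm hsupp (f i)
    have h3 : (N : ℝ) ≤ M / ε' := (le_div_iff₀ hε').2 (h1.trans h2)
    have h4 : (M / ε' : ℝ) < N := by
      rw [hNdef]
      push_cast
      calc (M / ε' : ℝ) ≤ ⌈M / ε'⌉₊ := Nat.le_ceil _
        _ < ⌈M / ε'⌉₊ + 1 := by linarith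
    linarith
  obtain ⟨k, hk⟩ := key
  refine ⟨h k, hh1 k, hh2 k, (hh3 k).trans (hV k).2.2, ?_⟩
  set x : LinearMap.range Φ := ⟨Φ (h k), LinearMap.mem_range_self _ _⟩ with hxdef
  have hx : Φ (S x) = Φ (h k) := by
    have := LinearMap.congr_fun hS x
    simpa [hxdef] using congrArg Subtype.val this
  have hy : h k - S x ∈ ⨅ i, LinearMap.ker (f i).toLinearMap := by
    refine (hker _).1 ?_
    rw [map_sub, hx, sub_self]
  refine lt_of_le_of_lt (Metric.infDist_le_dist_of_mem hy) ?_
  rw [dist_eq_norm, sub_sub_cancel]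
  have hxnorm : ‖x‖ < ε' := by
    have hxeq : ‖x‖ = ‖Φ (h k)‖ := rfl
    rw [hxeq]
    refine lt_of_le_of_lt ?_ hk
    refine (pi_norm_le_iff_of_nonneg (Finset.sum_nonneg fun i _ => norm_nonneg _)).2 fun i => ?_
    exact Finset.single_le_sum (f := fun i => ‖f i (h k)‖) (fun i _ => norm_nonneg _)
      (Finset.mem_univ i)
  have hSx : ‖S x‖ ≤ ‖Sc‖ * ‖x‖ := by
    have : S x = Sc x := rfl
    rw [this]
    exact Sc.le_opNorm x
  have hεeq : (‖Sc‖ + 1) * ε' = ε := by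
    rw [hε'def]
    field_simp
  nlinarith [norm_nonneg Sc, norm_nonneg x, hSx, hxnorm, hε']
end

section
/- Let c be the real Banach space of convergent sequences with the sup norm, and let X = {(x, y, z) ∈ c ⊕_∞ c ⊕_∞ c : lim x + lim y + lim z = 0}. Then the numerical index of X equals 1, i.e., n(X) = 1. -/
open Filter Topology Metric
open scoped ENNReal

set_option maxHeartbeats 1000000
set_option synthInstance.maxHeartbeats 1000000

/-- The ambient space of `c ⊕_∞ c ⊕_∞ c`: triples of bounded real sequences with the
`ℓ_∞`-sum of the sup norms, `‖(x,y,z)‖ = max (‖x‖, ‖y‖, ‖z‖)`. -/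
noncomputable abbrev BddSeqTriple : Type :=
  (lp (fun _ : ℕ => ℝ) ∞) × (lp (fun _ : ℕ => ℝ) ∞) × (lp (fun _ : ℕ => ℝ) ∞)

/-- The space `X = {(x,y,z) ∈ c ⊕_∞ c ⊕_∞ c : lim x + lim y + lim z = 0}`: the subspace of
triples of *convergent* sequences whose limits add up to `0`, inside the sup-normed space of
triples of bounded sequences (so it carries exactly the norm of `c ⊕_∞ c ⊕_∞ c`). -/
noncomputable def limSumZeroSubspace : Submodule ℝ BddSeqTriple where
  carrier := {p | ∃ a b c : ℝ, Filter.Tendsto (⇑p.1) Filter.atTop (nhds a) ∧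
    Filter.Tendsto (⇑p.2.1) Filter.atTop (nhds b) ∧
    Filter.Tendsto (⇑p.2.2) Filter.atTop (nhds c) ∧ a + b + c = 0}
  add_mem' := by
    rintro p q ⟨a, b, c, ha, hb, hc, habc⟩ ⟨a', b', c', ha', hb', hc', habc'⟩
    refine ⟨a + a', b + b', c + c', ?_, ?_, ?_, by linarith⟩
    · first | exact ha.add ha' | (convert ha.add ha' using 1; ext; simp)
    · first | exact hb.add hb' | (convert hb.add hb' using 1; ext; simp)
    · first | exact hc.add hc' | (convert hc.add hc' using 1; ext; simp)
  zero_mem' := ⟨0, 0, 0,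
    by simp only [Prod.fst_zero, lp.coeFn_zero]; exact tendsto_const_nhds,
    by simp only [Prod.snd_zero, Prod.fst_zero, lp.coeFn_zero]; exact tendsto_const_nhds,
    by simp only [Prod.snd_zero, lp.coeFn_zero]; exact tendsto_const_nhds, by ring⟩
  smul_mem' := by
    rintro r p ⟨a, b, c, ha, hb, hc, habc⟩
    refine ⟨r * a, r * b, r * c, ?_, ?_, ?_, by rw [← mul_add, ← mul_add, habc, mul_zero]⟩
    · simpa [lp.coeFn_smul, Pi.smul_def, smul_eq_mul] using ha.const_mul r
    · simpa [lp.coeFn_smul, Pi.smul_def, smul_eq_mul] using hb.const_mul r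
    · simpa [lp.coeFn_smul, Pi.smul_def, smul_eq_mul] using hc.const_mul r

noncomputable section NXAux

abbrev cSeq : Type := lp (fun _ : ℕ => ℝ) ∞

/-- The `j`-th component of a triple (j = 0, 1, anything else ↦ 2). -/
def compT (j : ℕ) (p : cSeq × cSeq × cSeq) : cSeq :=
  if j = 0 then p.1 else if j = 1 then p.2.1 else p.2.2

lemma compT_add (j : ℕ) (p q : cSeq × cSeq × cSeq) :
    compT j (p + q) = compT j p + compT j q := by
  unfold compT; split_ifs <;> rfl

lemma compT_smul (j : ℕ) (c : ℝ) (p : cSeq × cSeq × cSeq) :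
    compT j (c • p) = c • compT j p := by
  unfold compT; split_ifs <;> rfl

lemma compT_norm_le (j : ℕ) (p : cSeq × cSeq × cSeq) : ‖compT j p‖ ≤ ‖p‖ := by
  have h : ‖p‖ = max ‖p.1‖ (max ‖p.2.1‖ ‖p.2.2‖) := rfl
  unfold compT
  split_ifs <;> rw [h]
  · exact le_max_left _ _
  · exact le_trans (le_max_left _ _) (le_max_right _ _)
  · exact le_trans (le_max_right _ _) (le_max_right _ _)

lemma norm_le_of_compT (p : cSeq × cSeq × cSeq) {C : ℝ} (hC : 0 ≤ C)
    (h : ∀ j, j < 3 → ∀ m, ‖compT j p m‖ ≤ C) : ‖p‖ ≤ C := by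
  have h0 : ‖p.1‖ ≤ C := lp.norm_le_of_forall_le hC (fun m => by simpa [compT] using h 0 (by norm_num) m)
  have h1 : ‖p.2.1‖ ≤ C := lp.norm_le_of_forall_le hC (fun m => by simpa [compT] using h 1 (by norm_num) m)
  have h2 : ‖p.2.2‖ ≤ C := lp.norm_le_of_forall_le hC (fun m => by simpa [compT] using h 2 (by norm_num) m)
  have hn : ‖p‖ = max ‖p.1‖ (max ‖p.2.1‖ ‖p.2.2‖) := rfl
  rw [hn]
  exact max_le h0 (max_le h1 h2)

lemma seq_exists_gt (f : cSeq) {c : ℝ} (h : c < ‖f‖) : ∃ m, c < ‖f m‖ := by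
  have hb : BddAbove (Set.range fun m => ‖f m‖) := memℓp_infty_iff.mp (lp.memℓp f)
  rw [lp.norm_eq_ciSup] at h
  exact (lt_ciSup_iff hb).mp h

lemma exists_compT_gt (p : cSeq × cSeq × cSeq) {c : ℝ} (h : c < ‖p‖) :
    ∃ j, j < 3 ∧ ∃ m, c < ‖compT j p m‖ := by
  have hn : ‖p‖ = max ‖p.1‖ (max ‖p.2.1‖ ‖p.2.2‖) := rfl
  rw [hn] at h
  rcases lt_max_iff.mp h with h | h
  · obtain ⟨m, hm⟩ := seq_exists_gt _ h
    exact ⟨0, by norm_num, m, by simpa [compT] using hm⟩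
  rcases lt_max_iff.mp h with h | h
  · obtain ⟨m, hm⟩ := seq_exists_gt _ h
    exact ⟨1, by norm_num, m, by simpa [compT] using hm⟩
  · obtain ⟨m, hm⟩ := seq_exists_gt _ h
    exact ⟨2, by norm_num, m, by simpa [compT] using hm⟩

/-- The coordinate functional `p ↦ p_{j,m}` as a continuous linear map. -/
def coordCLM (j m : ℕ) : (cSeq × cSeq × cSeq) →L[ℝ] ℝ :=
  LinearMap.mkContinuous
    { toFun := fun p => compT j p m
      map_add' := fun p q => by
        show (compT j (p + q)) m = (compT j p) m + (compT j q) m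
        rw [compT_add, lp.coeFn_add]; rfl
      map_smul' := fun c p => by
        show (compT j (c • p)) m = c • (compT j p) m
        rw [compT_smul, lp.coeFn_smul]; rfl }
    1
    (fun p => by
      rw [one_mul]
      exact le_trans (lp.norm_apply_le_norm (by norm_num) (compT j p) m)
        (compT_norm_le j p))

lemma coordCLM_apply (j m : ℕ) (p : cSeq × cSeq × cSeq) : coordCLM j m p = compT j p m := rfl

lemma abs_coordCLM_le (j m : ℕ) (p : cSeq × cSeq × cSeq) : |coordCLM j m p| ≤ ‖p‖ :=
  le_trans (lp.norm_apply_le_norm (by norm_num) (compT j p) m) (compT_norm_le j p)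

/-- The standard basis vector: coordinate `(j, m)` equals `1`, all others `0`. -/
def singT (j m : ℕ) : cSeq × cSeq × cSeq :=
  if j = 0 then (lp.single ∞ m (1:ℝ), 0, 0)
  else if j = 1 then (0, lp.single ∞ m (1:ℝ), 0)
  else (0, 0, lp.single ∞ m (1:ℝ))

lemma coordCLM_singT_self (j m : ℕ) (hj : j < 3) : coordCLM j m (singT j m) = 1 := by
  interval_cases j <;>
    simp [coordCLM_apply, compT, singT, lp.single_apply_self]

lemma coordCLM_singT_ne (j' m' j m : ℕ) (h : ¬(j' = j ∧ m' = m)) (hj : j < 3) (hj' : j' < 3) :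
    coordCLM j' m' (singT j m) = 0 := by
  interval_cases j <;> interval_cases j' <;>
    simp_all [coordCLM_apply, compT, singT, lp.single_apply_ne, lp.coeFn_zero]

end NXAux

section Part2
-- mimic the definitions from the problem file
noncomputable abbrev BddSeqTriple' : Type := cSeq × cSeq × cSeq

variable (S : Submodule ℝ BddSeqTriple')

lemma single_tendsto (m : ℕ) :
    Tendsto (⇑(lp.single ∞ m (1:ℝ) : cSeq)) atTop (nhds 0) := by
  have hev : (fun _ : ℕ => (0:ℝ)) =ᶠ[atTop] ⇑(lp.single ∞ m (1:ℝ) : cSeq) := by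
    filter_upwards [eventually_ge_atTop (m+1)] with n hn
    exact (lp.single_apply_ne (E := fun _ : ℕ => ℝ) ∞ m 1 (show n ≠ m by omega)).symm
  exact Tendsto.congr' hev tendsto_const_nhds

lemma zero_tendsto : Tendsto (⇑(0 : cSeq)) atTop (nhds (0:ℝ)) := by
  rw [lp.coeFn_zero]
  exact tendsto_const_nhds

end Part2


noncomputable section Main

open ContinuousLinearMap

local notation "XS" => limSumZeroSubspace

lemma singT_mem (j m : ℕ) : singT j m ∈ limSumZeroSubspace := by
  unfold singT
  split_ifs <;>
    exact ⟨0, 0, 0,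
      by first
        | exact single_tendsto m
        | exact zero_tendsto,
      by first
        | exact single_tendsto m
        | exact zero_tendsto,
      by first
        | exact single_tendsto m
        | exact zero_tendsto,
      by ring⟩

/-- the basis vectors as elements of the subspace -/
noncomputable def sigX (j m : ℕ) : ↥XS := ⟨singT j m, singT_mem j m⟩

lemma norm_coe_X (x : ↥XS) : ‖x‖ = ‖(x : BddSeqTriple)‖ := rfl

/-- coordinate functionals on the subspace -/
noncomputable def fXc (j m : ℕ) : ↥XS →L[ℝ] ℝ :=
  (coordCLM j m).comp (Submodule.subtypeL XS)

lemma fXc_apply (j m : ℕ) (x : ↥XS) : fXc j m x = coordCLM j m (x : BddSeqTriple) := rfl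

lemma norm_fXc_le (j m : ℕ) : ‖fXc j m‖ ≤ 1 := by
  refine ContinuousLinearMap.opNorm_le_bound _ zero_le_one (fun x => ?_)
  rw [one_mul, fXc_apply, Real.norm_eq_abs, norm_coe_X]
  exact abs_coordCLM_le j m _

lemma norm_sigX (j m : ℕ) (hj : j < 3) : ‖sigX j m‖ = 1 := by
  refine le_antisymm ?_ ?_
  · rw [norm_coe_X]
    refine norm_le_of_compT _ zero_le_one (fun j' hj' m' => ?_)
    have hcoe : ((sigX j m : BddSeqTriple)) = singT j m := rfl
    rw [hcoe]
    by_cases hc : j' = j ∧ m' = m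
    · obtain ⟨rfl, rfl⟩ := hc
      have h1 : compT j' (singT j' m') m' = (1:ℝ) := coordCLM_singT_self j' m' hj'
      rw [h1]; norm_num
    · have h1 : compT j' (singT j m) m' = (0:ℝ) := coordCLM_singT_ne j' m' j m hc hj hj'
      rw [h1]; norm_num
  · have h1 : coordCLM j m ((sigX j m : BddSeqTriple)) = 1 := coordCLM_singT_self j m hj
    have := abs_coordCLM_le j m ((sigX j m : BddSeqTriple))
    rw [h1, norm_coe_X] at *
    simpa using this

lemma fXc_sigX (j m : ℕ) (hj : j < 3) : fXc j m (sigX j m) = 1 := by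
  rw [fXc_apply]; exact coordCLM_singT_self j m hj

lemma norm_fXc (j m : ℕ) (hj : j < 3) : ‖fXc j m‖ = 1 := by
  refine le_antisymm (norm_fXc_le j m) ?_
  have := (fXc j m).le_opNorm (sigX j m)
  rw [fXc_sigX j m hj, norm_sigX j m hj, mul_one, Real.norm_eq_abs] at this
  simpa using this

/-- the numerical-radius defining set -/
def radSet (T : ↥XS →L[ℝ] ↥XS) : Set ℝ :=
  {r : ℝ | ∃ (x : ↥XS) (f : ↥XS →L[ℝ] ℝ), ‖x‖ = 1 ∧ ‖f‖ = 1 ∧ f x = 1 ∧ r = ‖f (T x)‖}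

lemma numRadius_eq (T : ↥XS →L[ℝ] ↥XS) : numRadius ℝ T = sSup (radSet T) := rfl

lemma radSet_le (T : ↥XS →L[ℝ] ↥XS) : ∀ r ∈ radSet T, r ≤ ‖T‖ := by
  rintro r ⟨x, f, hx, hf, hfx, rfl⟩
  calc ‖f (T x)‖ ≤ ‖f‖ * ‖T x‖ := f.le_opNorm _
    _ ≤ 1 * (‖T‖ * ‖x‖) := by
        rw [hf]; gcongr; exact T.le_opNorm x
    _ = ‖T‖ := by rw [hx]; ring

lemma radSet_bddAbove (T : ↥XS →L[ℝ] ↥XS) : BddAbove (radSet T) :=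
  ⟨‖T‖, radSet_le T⟩

lemma max_bound_aux {a b A B c : ℝ} (ha : 0 ≤ a) (hb : 0 ≤ b) (hab : a + b = 1)
    (h2 : c < a * A - b * B) : c < max |A| |B| := by
  rcases le_total |B| |A| with h | h
  · refine lt_max_iff.mpr (Or.inl ?_)
    nlinarith [le_abs_self A, neg_abs_le B, abs_nonneg A]
  · refine lt_max_iff.mpr (Or.inr ?_)
    nlinarith [le_abs_self A, neg_abs_le B, abs_nonneg B]

lemma one_le_numRadius (T : ↥XS →L[ℝ] ↥XS) (hT : ‖T‖ = 1) : 1 ≤ numRadius ℝ T := by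
  rw [numRadius_eq]
  refine le_of_forall_pos_le_add (fun ε hε => ?_)
  -- find an almost norming vector
  obtain ⟨u, hu, hTu⟩ := T.exists_lt_apply_of_lt_opNorm (r := 1 - ε) (by rw [hT]; linarith)
  rw [norm_coe_X] at hTu
  obtain ⟨k, hk3, m, hkm⟩ := exists_compT_gt _ hTu
  set r₀ : ℝ := coordCLM k m ((T u : BddSeqTriple)) with hr₀def
  have hr : 1 - ε < |r₀| := by
    rw [hr₀def, coordCLM_apply, ← Real.norm_eq_abs]; exact hkm
  set s : ℝ := if r₀ < 0 then -1 else 1 with hsdef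
  have hs1 : s * s = 1 := by rw [hsdef]; split_ifs <;> norm_num
  have hsabs : |s| = 1 := by rw [hsdef]; split_ifs <;> norm_num
  have hsr : s * r₀ = |r₀| := by
    rw [hsdef]; split_ifs with h
    · rw [abs_of_neg h]; ring
    · rw [abs_of_nonneg (not_lt.mp h)]; ring
  set u₀ : ℝ := coordCLM k m ((u : BddSeqTriple)) with hu₀def
  have hu₀le : |u₀| ≤ 1 := by
    refine le_trans (abs_coordCLM_le k m _) ?_
    rw [← norm_coe_X]; exact hu.le
  set σ : ↥XS := sigX k m with hσdef
  set x₁ : ↥XS := u + (s - u₀) • σ with hx₁def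
  set x₂ : ↥XS := -u + (s + u₀) • σ with hx₂def
  set a : ℝ := (1 + s * u₀) / 2 with hadef
  set b : ℝ := (1 - s * u₀) / 2 with hbdef
  have hsu : |s * u₀| ≤ 1 := by rw [abs_mul, hsabs, one_mul]; exact hu₀le
  have ha0 : 0 ≤ a := by rw [hadef]; have := (abs_le.mp hsu).1; linarith
  have hb0 : 0 ≤ b := by rw [hbdef]; have := (abs_le.mp hsu).2; linarith
  have hab : a + b = 1 := by rw [hadef, hbdef]; ring
  -- coordinates of x₁ and x₂
  have hcoe₁ : ((x₁ : BddSeqTriple)) = (u : BddSeqTriple) + (s - u₀) • (singT k m) := rfl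
  have hcoe₂ : ((x₂ : BddSeqTriple)) = -(u : BddSeqTriple) + (s + u₀) • (singT k m) := rfl
  have hcx₁ : coordCLM k m ((x₁ : BddSeqTriple)) = s := by
    rw [hcoe₁, map_add, map_smul, coordCLM_singT_self k m hk3, smul_eq_mul, ← hu₀def]; ring
  have hcx₂ : coordCLM k m ((x₂ : BddSeqTriple)) = s := by
    rw [hcoe₂, map_add, map_smul, map_neg, coordCLM_singT_self k m hk3, smul_eq_mul,
      ← hu₀def]; ring
  -- norms of x₁ and x₂
  have hnorm_aux : ∀ (x : ↥XS), ((x : BddSeqTriple)) = (u : BddSeqTriple) + (s - u₀) • (singT k m) ∨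
      ((x : BddSeqTriple)) = -(u : BddSeqTriple) + (s + u₀) • (singT k m) →
      coordCLM k m ((x : BddSeqTriple)) = s → ‖x‖ = 1 := by
    rintro x hcoe hcs
    refine le_antisymm ?_ ?_
    · rw [norm_coe_X]
      refine norm_le_of_compT _ zero_le_one (fun j' hj' m' => ?_)
      have hcomp : compT j' ((x : BddSeqTriple)) m' = coordCLM j' m' ((x : BddSeqTriple)) := rfl
      rw [hcomp]
      by_cases hc : j' = k ∧ m' = m
      · obtain ⟨rfl, rfl⟩ := hc
        rw [hcs, Real.norm_eq_abs, hsabs]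
      · have hzero : coordCLM j' m' (singT k m) = 0 := coordCLM_singT_ne j' m' k m hc hk3 hj'
        rcases hcoe with hcoe | hcoe <;>
          rw [hcoe] <;>
          simp only [map_add, map_smul, map_neg, hzero, smul_eq_mul, mul_zero, add_zero] <;>
          rw [Real.norm_eq_abs]
        · exact le_trans (abs_coordCLM_le j' m' _) (by rw [← norm_coe_X]; exact hu.le)
        · rw [abs_neg]
          exact le_trans (abs_coordCLM_le j' m' _) (by rw [← norm_coe_X]; exact hu.le)
    · have h1 := abs_coordCLM_le k m ((x : BddSeqTriple))
      rw [hcs, hsabs, ← norm_coe_X] at h1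
      exact h1
  have hnx₁ : ‖x₁‖ = 1 := hnorm_aux x₁ (Or.inl hcoe₁) hcx₁
  have hnx₂ : ‖x₂‖ = 1 := hnorm_aux x₂ (Or.inr hcoe₂) hcx₂
  -- the functional
  set f : ↥XS →L[ℝ] ℝ := s • fXc k m with hfdef
  have hfapp : ∀ x : ↥XS, f x = s * coordCLM k m ((x : BddSeqTriple)) := by
    intro x
    rw [hfdef]
    simp [fXc_apply]
  have hfx₁ : f x₁ = 1 := by rw [hfapp, hcx₁, hs1]
  have hfx₂ : f x₂ = 1 := by rw [hfapp, hcx₂, hs1]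
  have hfle : ‖f‖ ≤ 1 := by
    refine ContinuousLinearMap.opNorm_le_bound _ zero_le_one (fun x => ?_)
    rw [one_mul, hfapp, Real.norm_eq_abs, abs_mul, hsabs, one_mul, norm_coe_X]
    exact abs_coordCLM_le k m _
  have hfn : ‖f‖ = 1 := by
    refine le_antisymm hfle ?_
    have := f.le_opNorm x₁
    rw [hfx₁, hnx₁, mul_one, Real.norm_eq_abs] at this
    simpa using this
  -- the decomposition u = a • x₁ - b • x₂
  have hzero : a * (s - u₀) - b * (s + u₀) = 0 := by
    rw [hadef, hbdef]; linear_combination u₀ * hs1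
  have hkey : u = a • x₁ - b • x₂ := by
    have step : a • x₁ - b • x₂ = (a + b) • u + (a * (s - u₀) - b * (s + u₀)) • σ := by
      rw [hx₁def, hx₂def]; module
    rw [step, hab, hzero, one_smul, zero_smul, add_zero]
  -- conclude
  have hfTu : f (T u) = |r₀| := by rw [hfapp, ← hr₀def, hsr]
  have hsplit : f (T u) = a * f (T x₁) - b * f (T x₂) := by
    conv_lhs => rw [hkey]
    rw [map_sub, map_smul, map_smul, map_sub, map_smul, map_smul]
    simp [smul_eq_mul]
  have h2 : 1 - ε < a * f (T x₁) - b * f (T x₂) := by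
    rw [← hsplit, hfTu]; exact hr
  have hmax : 1 - ε < max |f (T x₁)| |f (T x₂)| := max_bound_aux ha0 hb0 hab h2
  rw [← Real.norm_eq_abs, ← Real.norm_eq_abs] at hmax
  rcases lt_max_iff.mp hmax with h | h
  · have hmem : ‖f (T x₁)‖ ∈ radSet T := ⟨x₁, f, hnx₁, hfn, hfx₁, rfl⟩
    have := le_csSup (radSet_bddAbove T) hmem
    linarith
  · have hmem : ‖f (T x₂)‖ ∈ radSet T := ⟨x₂, f, hnx₂, hfn, hfx₂, rfl⟩
    have := le_csSup (radSet_bddAbove T) hmem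
    linarith

instance : Nontrivial (↥XS) := by
  refine ⟨sigX 0 0, 0, fun h => ?_⟩
  have := norm_sigX 0 0 (by norm_num)
  rw [h, norm_zero] at this
  norm_num at this

lemma numRadius_id : numRadius ℝ (ContinuousLinearMap.id ℝ (↥XS)) = 1 := by
  rw [numRadius_eq]
  have hset : radSet (ContinuousLinearMap.id ℝ (↥XS)) = {1} := by
    ext r
    constructor
    · rintro ⟨x, f, hx, hf, hfx, rfl⟩
      simp [ContinuousLinearMap.id_apply, hfx]
    · rintro rfl
      exact ⟨sigX 0 0, fXc 0 0, norm_sigX 0 0 (by norm_num), norm_fXc 0 0 (by norm_num),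
        fXc_sigX 0 0 (by norm_num), by simp [fXc_sigX 0 0 (by norm_num)]⟩
  rw [hset, csSup_singleton]

end Main

/-- The space `X = {(x,y,z) ∈ c ⊕_∞ c ⊕_∞ c : lim x + lim y + lim z = 0}` has numerical
index 1. -/
theorem numIndex_limSumZeroSubspace : numIndex ℝ ↥limSumZeroSubspace = 1 := by
  have hmem : (1:ℝ) ∈ {r : ℝ | ∃ T : ↥limSumZeroSubspace →L[ℝ] ↥limSumZeroSubspace,
      ‖T‖ = 1 ∧ r = numRadius ℝ T} :=
    ⟨ContinuousLinearMap.id ℝ _, ContinuousLinearMap.norm_id, numRadius_id.symm⟩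
  have hlb : ∀ r ∈ {r : ℝ | ∃ T : ↥limSumZeroSubspace →L[ℝ] ↥limSumZeroSubspace,
      ‖T‖ = 1 ∧ r = numRadius ℝ T}, (1:ℝ) ≤ r := by
    rintro r ⟨T, hT, rfl⟩
    exact one_le_numRadius T hT
  exact le_antisymm (csInf_le ⟨1, hlb⟩ hmem) (le_csInf ⟨1, hmem⟩ hlb)
end

section
/- Let K be the compact Hausdorff space consisting of three disjoint copies of the one-point compactification ℕ ∪ {∞} of ℕ (i.e., K = (ℕ ∪ {∞}) × {1,2,3}), with points at infinity ∞₁, ∞₂, ∞₃. Then the closed subspace X = {f ∈ C(K, ℝ) : f(∞₁) + f(∞₂) + f(∞₃) = 0} is a C-rich subspace of C(K, ℝ). -/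
open Filter Topology Metric OnePoint

/-- The compact Hausdorff space consisting of three disjoint copies of the one-point
compactification `ℕ ∪ {∞}` of `ℕ`. -/
abbrev ThreeCopies : Type := OnePoint ℕ × Fin 3

/-- The subspace `X = {f ∈ C(K, ℝ) : f(∞₁) + f(∞₂) + f(∞₃) = 0}` of `C(K, ℝ)`, where `K`
is three disjoint copies of `ℕ ∪ {∞}` with points at infinity `∞₁, ∞₂, ∞₃`. -/
noncomputable def inftySumZeroSubspace : Submodule ℝ C(ThreeCopies, ℝ) where
  carrier := {f | f (∞, 0) + f (∞, 1) + f (∞, 2) = 0}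
  add_mem' := by
    intro f g hf hg
    simp only [Set.mem_setOf_eq, ContinuousMap.add_apply] at *
    linarith
  zero_mem' := by simp
  smul_mem' := by
    intro r f hf
    simp only [Set.mem_setOf_eq, ContinuousMap.smul_apply, smul_eq_mul] at *
    rw [← mul_add, ← mul_add, hf, mul_zero]

/-- The subspace `{f ∈ C(K, ℝ) : f(∞₁) + f(∞₂) + f(∞₃) = 0}`, for `K` three disjoint copies
of `ℕ ∪ {∞}`, is a C-rich subspace of `C(K, ℝ)`. -/
theorem isCRich_inftySumZeroSubspace : IsCRich inftySumZeroSubspace := by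
  intro U hU hne ε hε
  -- U contains a point (↑n, i)
  obtain ⟨⟨x, i⟩, hxU⟩ := hne
  have key : ∃ n : ℕ, ((↑n : OnePoint ℕ), i) ∈ U := by
    cases x using OnePoint.rec with
    | infty =>
      have hslice : IsOpen {y : OnePoint ℕ | (y, i) ∈ U} :=
        hU.preimage (Continuous.prodMk_left i)
      have hmem : ∞ ∈ {y : OnePoint ℕ | (y, i) ∈ U} := hxU
      rw [OnePoint.isOpen_iff_of_mem hmem] at hslice
      have hfin : ((((↑) : ℕ → OnePoint ℕ) ⁻¹' {y | (y, i) ∈ U})ᶜ).Finite :=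
        hslice.2.finite ⟨inferInstance⟩
      have hinf : (((↑) : ℕ → OnePoint ℕ) ⁻¹' {y | (y, i) ∈ U}).Infinite := by
        have := Set.Finite.infinite_compl hfin
        rwa [compl_compl] at this
      obtain ⟨n, hn⟩ := hinf.nonempty
      exact ⟨n, hn⟩
    | coe n => exact ⟨n, hxU⟩
  obtain ⟨n, hnU⟩ := key
  -- the singleton is clopen
  have hclopen : IsClopen {((↑n : OnePoint ℕ), i)} := by
    constructor
    · exact isClosed_singleton
    · have : ({((↑n : OnePoint ℕ), i)} : Set ThreeCopies) =
          ({(↑n : OnePoint ℕ)} : Set (OnePoint ℕ)) ×ˢ ({i} : Set (Fin 3)) := by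
        simp [Set.singleton_prod_singleton]
      rw [this]
      refine IsOpen.prod ?_ (isOpen_discrete _)
      have := OnePoint.isOpenEmbedding_coe (X := ℕ) |>.isOpenMap {n} (isOpen_discrete _)
      simpa [Set.image_singleton] using this
  set a : ThreeCopies := ((↑n : OnePoint ℕ), i)
  refine ⟨⟨Set.indicator {a} 1, continuous_indicator (by simp [hclopen]) 
    continuous_const.continuousOn⟩, ?_, ?_, ?_, ?_⟩
  · apply le_antisymm
    · apply ContinuousMap.norm_le _ zero_le_one |>.mpr
      intro t
      by_cases ht : t = a <;> simp [ht, Set.indicator_apply]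
    · have := ContinuousMap.norm_coe_le_norm (⟨Set.indicator {a} 1,
        continuous_indicator (by simp [hclopen]) continuous_const.continuousOn⟩ :
          C(ThreeCopies, ℝ)) a
      simpa using this
  · intro t
    by_cases ht : t = a <;> simp [ht, Set.indicator_apply]
  · intro t ht
    simp only [Function.mem_support, ContinuousMap.coe_mk] at ht
    by_cases h : t = a
    · exact h ▸ hnU
    · simp [Set.indicator_apply, h] at ht
  · have hmem : (⟨Set.indicator {a} 1, continuous_indicator (by simp [hclopen]) 
        continuous_const.continuousOn⟩ : C(ThreeCopies, ℝ)) ∈ inftySumZeroSubspace := by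
      show Set.indicator {a} (1 : ThreeCopies → ℝ) (∞, 0) + _ + _ = 0
      have h0 : ∀ j : Fin 3, ((∞ : OnePoint ℕ), j) ≠ a := by
        intro j habs
        have : (∞ : OnePoint ℕ) = ↑n := congrArg Prod.fst habs
        exact (OnePoint.infty_ne_coe n) this
      simp [Set.indicator_apply, h0 0, h0 1, h0 2]
    calc Metric.infDist _ _ ≤ dist _ _ := Metric.infDist_le_dist_of_mem hmem
      _ = 0 := dist_self _
      _ < ε := hε
end
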